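/- arXiv:1601.06435 — 5 statements merged into one kernel-verified Lean document; each statement's English description precedes it below -/
import Mathlib

section
/- Let θ ∈ [0,1] be irrational and α ≥ 1. Set A_α(θ) = limsup_{n→∞} aₙ qₙ₋₁^{1-α}, where aₙ are the continued fraction entries of θ and qₙ the continued fraction denominators. Then A_α(θ) < ∞ if and only if A_α(1-θ) < ∞, and A_α(θ) > 0 if and only if A_α(1-θ) > 0. -/
open Filter Topology MeasureTheory

namespace CFPaper

/-- Continued fraction denominators: `q 0 = 1`, `q 1 = a 1`, `q (n+2) = a (n+2) * q (n+1) + q n`. -/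
def cfQ (a : ℕ → ℕ) : ℕ → ℕ
  | 0 => 1
  | 1 => a 1
  | (n+2) => a (n+2) * cfQ a (n+1) + cfQ a n

/-- Continued fraction numerators. -/
def cfP (a : ℕ → ℕ) : ℕ → ℕ
  | 0 => 0
  | 1 => 1
  | (n+2) => a (n+2) * cfP a (n+1) + cfP a n

/-- `q_{n-1}` with the convention `q_{-1} = 0`. -/
def qext (a : ℕ → ℕ) : ℕ → ℕ
  | 0 => 0
  | (n+1) => cfQ a n

/-- `p_{n-1}` with the convention `p_{-1} = 1`. -/
def pext (a : ℕ → ℕ) : ℕ → ℕ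
  | 0 => 1
  | (n+1) => cfP a n

/-- `a` (with `a 1, a 2, …` relevant) is the continued fraction expansion of the
irrational `θ`: all entries are positive and the convergents tend to `θ`. -/
def IsCF (θ : ℝ) (a : ℕ → ℕ) : Prop :=
  Irrational θ ∧ (∀ n, 1 ≤ n → 1 ≤ a n) ∧
    Tendsto (fun n => (cfP a n : ℝ) / (cfQ a n : ℝ)) atTop (nhds θ)

/-- `A_α(θ) = limsup_n a_n q_{n-1}^{1-α}` (valued in `ℝ≥0∞`). -/
noncomputable def Acf (a : ℕ → ℕ) (α : ℝ) : ENNReal :=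
  Filter.limsup (fun n => (a (n+1) : ENNReal) * (cfQ a n : ENNReal) ^ (1 - α)) atTop

/-- The left shift on infinite binary sequences. -/
def shiftMap (x : ℕ → Bool) : ℕ → Bool := fun n => x (n+1)

/-- A subshift: a closed shift-invariant subset of `{0,1}^ℕ`. -/
def IsSubshift (Y : Set (ℕ → Bool)) : Prop := IsClosed Y ∧ shiftMap '' Y = Y

/-- The language of `Y`: all finite factors of elements of `Y`. -/
def Lang (Y : Set (ℕ → Bool)) : Set (List Bool) :=
  {w | ∃ x ∈ Y, ∃ k, w = (List.range w.length).map fun i => x (k + i)}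

/-- The rotation sequence of slope `θ`: `x n = ⌈θ(n+1)⌉ - ⌈θ n⌉` (as a boolean, `true` = 1). -/
noncomputable def rotWord (θ : ℝ) : ℕ → Bool :=
  fun n => if ⌈θ * ((n : ℝ)+1)⌉ - ⌈θ * (n : ℝ)⌉ = 1 then true else false

/-- The Sturmian subshift of slope `θ`: orbit closure of the rotation sequence. -/
noncomputable def sturmian (θ : ℝ) : Set (ℕ → Bool) :=
  closure {x | ∃ k, x = shiftMap^[k] (rotWord θ)}

/-- `w` is a nonempty proper prefix and suffix of `W`, both in the language of `Y`. -/
def PSPair (Y : Set (ℕ → Bool)) (w W : List Bool) : Prop :=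
  w ∈ Lang Y ∧ W ∈ Lang Y ∧ w <+: W ∧ w <:+ W ∧ W ≠ w ∧ w ≠ []

/-- `A_{α,n}`: infimum of `(|W|-|w|)/|w|^{1/α}` over admissible pairs with `|W| = n`. -/
noncomputable def repA (Y : Set (ℕ → Bool)) (α : ℝ) (n : ℕ) : ENNReal :=
  sInf {r | ∃ w W, PSPair Y w W ∧ W.length = n ∧
    r = ((W.length - w.length : ℕ) : ENNReal) / ((w.length : ENNReal) ^ (1/α))}

/-- `ℓ_α = liminf_n A_{α,n}`. -/
noncomputable def ellCf (Y : Set (ℕ → Bool)) (α : ℝ) : ENNReal :=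
  Filter.liminf (repA Y α) atTop

/-- `ℓ`: infimum of `(|W|-|w|)/|w|` over all admissible pairs; `Y` is repulsive if `ℓ > 0`. -/
noncomputable def ellRep (Y : Set (ℕ → Bool)) : ENNReal :=
  sInf {r | ∃ w W, PSPair Y w W ∧
    r = ((W.length - w.length : ℕ) : ENNReal) / (w.length : ENNReal)}

/-- The repetitive function: `repFun Y r` is the least `r'` such that every word of
length `r'` in the language contains every word of length `r` as a factor. -/
noncomputable def repFun (Y : Set (ℕ → Bool)) (r : ℕ) : ℕ :=
  sInf {r' | ∀ W ∈ Lang Y, W.length = r' → ∀ w ∈ Lang Y, w.length = r → w <:+: W}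

/-- `R_α = limsup_n R(n)/n^α`. -/
noncomputable def Ralpha (Y : Set (ℕ → Bool)) (α : ℝ) : ENNReal :=
  Filter.limsup (fun n => (repFun Y n : ENNReal) / (n : ENNReal) ^ α) atTop

/-- `Q(n)`: the supremum of powers `p` such that some word of length `n` has `W^p` in the language. -/
noncomputable def Qfun (Y : Set (ℕ → Bool)) (n : ℕ) : ENNReal :=
  sSup {x | ∃ p : ℕ, x = (p : ENNReal) ∧ ∃ W ∈ Lang Y,
    W.length = n ∧ (List.replicate p W).flatten ∈ Lang Y}

/-- `Q_α = limsup_n Q(n)/n^{α-1}`. -/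
noncomputable def Qalpha (Y : Set (ℕ → Bool)) (α : ℝ) : ENNReal :=
  Filter.limsup (fun n => Qfun Y n / (n : ENNReal) ^ (α - 1)) atTop

/-- The Jarník set `J_β^c`. -/
def Jarnik (β c : ℝ) : Set ℝ :=
  {x | x ∈ Set.Icc (0:ℝ) 1 ∧
    {pq : ℕ × ℕ | 0 < pq.2 ∧ |x - (pq.1 : ℝ)/(pq.2 : ℝ)| ≤ c * (pq.2 : ℝ) ^ (-β)}.Infinite}

/-- The exact Jarník set `Exact(β)`. -/
def ExactSet (β : ℝ) : Set ℝ :=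
  Jarnik β 1 \ ⋃ n ∈ {n : ℕ | 2 ≤ n}, Jarnik β ((n : ℝ)/((n : ℝ)+1))

/-- The substitution `τ` : `0 ↦ 0`, `1 ↦ 10`. -/
def tauW (w : List Bool) : List Bool := w.flatMap fun b => if b then [true, false] else [false]

/-- The substitution `ρ` : `0 ↦ 01`, `1 ↦ 1`. -/
def rhoW (w : List Bool) : List Bool := w.flatMap fun b => if b then [true] else [false, true]

/-- The composition `τ^{a₁} ∘ ρ^{a₂} ∘ ⋯ ∘ τ^{a_{2k-1}} ∘ ρ^{a_{2k}}`. -/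
def stageW (a : ℕ → ℕ) : ℕ → List Bool → List Bool
  | 0 => id
  | (k+1) => stageW a k ∘ tauW^[a (2*k+1)] ∘ rhoW^[a (2*k+2)]

/-- The word `R_k`. -/
def Rw (a : ℕ → ℕ) (k : ℕ) : List Bool := stageW a k [false]

/-- The word `L_k`. -/
def Lw (a : ℕ → ℕ) (k : ℕ) : List Bool := stageW a k [true]

/-- Best rational approximation of the first kind. -/
def IsBestApprox (θ : ℝ) (p q : ℕ) : Prop :=
  0 < q ∧ Nat.Coprime p q ∧
    ∀ p' q' : ℕ, 0 < q' → q' < q → |θ - (p : ℝ)/(q : ℝ)| < |θ - (p' : ℝ)/(q' : ℝ)|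

/-- The double sum `Σ_{k ≥ m} Σ_{j=1}^{a_{k+1}} (j q_k + q_{k-1})^{-t}` (valued in `ℝ≥0∞`). -/
noncomputable def dblSum (a : ℕ → ℕ) (t : ℝ) (m : ℕ) : ENNReal :=
  ∑' k : ℕ, if m ≤ k then
    ∑ j ∈ Finset.Icc 1 (a (k+1)), ((j * cfQ a k + qext a k : ℕ) : ENNReal) ^ (-t)
  else 0

/-! ### Auxiliary lemmas for `stmt1` -/

/-- shift of the entry sequence -/
private def sh (a : ℕ → ℕ) : ℕ → ℕ := fun n => a (n + 1)

private lemma cfQ_congr {a b : ℕ → ℕ} (h : ∀ n, 1 ≤ n → a n = b n) :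
    ∀ n, cfQ a n = cfQ b n
  | 0 => rfl
  | 1 => by simp only [cfQ]; exact h 1 le_rfl
  | (n + 2) => by
      simp only [cfQ]
      rw [h (n + 2) (by omega), cfQ_congr h (n + 1), cfQ_congr h n]

private lemma one_le_cfQ {a : ℕ → ℕ} (h : ∀ n, 1 ≤ n → 1 ≤ a n) :
    ∀ n, 1 ≤ cfQ a n
  | 0 => le_rfl
  | 1 => h 1 le_rfl
  | (n + 2) => by
      have := one_le_cfQ h n
      simp only [cfQ]; omega

private lemma cfP_le_cfQ {a : ℕ → ℕ} (h : ∀ n, 1 ≤ n → 1 ≤ a n) :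
    ∀ n, cfP a n ≤ cfQ a n
  | 0 => by simp [cfP, cfQ]
  | 1 => by simpa [cfP, cfQ] using h 1 le_rfl
  | (n + 2) => by
      simp only [cfP, cfQ]
      exact Nat.add_le_add (Nat.mul_le_mul_left _ (cfP_le_cfQ h (n + 1))) (cfP_le_cfQ h n)

private lemma cfP_succ (a : ℕ → ℕ) : ∀ n, cfP a (n + 1) = cfQ (sh a) n
  | 0 => rfl
  | 1 => by simp [cfP, cfQ, sh]
  | (n + 2) => by
      show a (n+1+2) * cfP a (n+1+1) + cfP a (n+1)
          = sh a (n+2) * cfQ (sh a) (n+1) + cfQ (sh a) n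
      rw [cfP_succ a (n + 1), cfP_succ a n]
      rfl

private lemma cfQ_succ (a : ℕ → ℕ) : ∀ n, cfQ a (n + 1) = a 1 * cfQ (sh a) n + cfP (sh a) n
  | 0 => by simp [cfQ, cfP, sh]
  | 1 => by simp only [cfQ, cfP, sh]; ring
  | (n + 2) => by
      show a (n+1+2) * cfQ a (n+1+1) + cfQ a (n+1)
          = a 1 * (sh a (n+2) * cfQ (sh a) (n+1) + cfQ (sh a) n)
            + (sh a (n+2) * cfP (sh a) (n+1) + cfP (sh a) n)
      rw [cfQ_succ a (n+1), cfQ_succ a n, show sh a (n+2) = a (n+1+2) from rfl]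
      ring

/-- Convergence part of `IsCF`, convenient repackaging. -/
private def Conv (θ : ℝ) (a : ℕ → ℕ) : Prop :=
  (∀ n, 1 ≤ n → 1 ≤ a n) ∧
    Tendsto (fun n => (cfP a n : ℝ) / (cfQ a n : ℝ)) atTop (nhds θ)

private lemma cfQ_pos {a : ℕ → ℕ} (h : ∀ n, 1 ≤ n → 1 ≤ a n) (n : ℕ) :
    (0 : ℝ) < cfQ a n := by exact_mod_cast one_le_cfQ h n

private lemma conv_mem_Icc {θ : ℝ} {a : ℕ → ℕ} (h : Conv θ a) : θ ∈ Set.Icc (0 : ℝ) 1 := by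
  refine isClosed_Icc.mem_of_tendsto h.2 (Eventually.of_forall fun n => ?_)
  have hq := cfQ_pos h.1 n
  have hpq : (cfP a n : ℝ) ≤ cfQ a n := by exact_mod_cast cfP_le_cfQ h.1 n
  exact ⟨div_nonneg (by positivity) hq.le, (div_le_one hq).2 hpq⟩

private lemma conv_tail {θ : ℝ} {a : ℕ → ℕ} (hirr : Irrational θ) (h : Conv θ a) :
    Conv (θ⁻¹ - a 1) (sh a) := by
  have h1 : ∀ n, 1 ≤ n → 1 ≤ sh a n := fun n _ => h.1 (n + 1) (by omega)
  refine ⟨h1, ?_⟩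
  have key : ∀ n, (cfP (sh a) n : ℝ) / cfQ (sh a) n
      = ((cfP a (n + 1) : ℝ) / cfQ a (n + 1))⁻¹ - a 1 := by
    intro n
    have hQ := cfQ_pos h1 n
    have hP : (0 : ℝ) ≤ cfP (sh a) n := by positivity
    have ha1 : (0 : ℝ) < a 1 := by exact_mod_cast h.1 1 le_rfl
    rw [cfP_succ, cfQ_succ]
    have hD : (0 : ℝ) < (a 1 * cfQ (sh a) n + cfP (sh a) n : ℕ) := by
      push_cast; nlinarith
    push_cast
    rw [inv_div]
    field_simp
    ring
  have hc : Tendsto (fun n => ((cfP a (n + 1) : ℝ) / cfQ a (n + 1))⁻¹ - a 1) atTop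
      (nhds (θ⁻¹ - a 1)) := by
    have := ((tendsto_add_atTop_iff_nat 1).2 h.2).inv₀ hirr.ne_zero
    exact this.sub_const _
  exact hc.congr fun n => (key n).symm

private lemma conv_first_entry {θ : ℝ} {a : ℕ → ℕ} (hirr : Irrational θ) (h : Conv θ a) :
    (a 1 : ℝ) < θ⁻¹ ∧ θ⁻¹ < a 1 + 1 := by
  have ht := conv_tail hirr h
  have hmem := conv_mem_Icc ht
  have hirr' : Irrational (θ⁻¹ - a 1) := hirr.inv.sub_natCast _
  have h0 : θ⁻¹ - a 1 ≠ 0 := hirr'.ne_zero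
  have h1 : θ⁻¹ - a 1 ≠ 1 := hirr'.ne_one
  obtain ⟨hl, hr⟩ := hmem
  constructor
  · rcases hl.lt_or_eq with hlt | heq
    · linarith
    · exact absurd heq.symm h0
  · rcases hr.lt_or_eq with hlt | heq
    · linarith
    · exact absurd heq h1

private lemma cf_unique_one {θ : ℝ} {a b : ℕ → ℕ} (hirr : Irrational θ)
    (ha : Conv θ a) (hb : Conv θ b) : a 1 = b 1 := by
  obtain ⟨ha1, ha2⟩ := conv_first_entry hirr ha
  obtain ⟨hb1, hb2⟩ := conv_first_entry hirr hb
  have h1 : (a 1 : ℝ) < (b 1 : ℝ) + 1 := lt_trans ha1 hb2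
  have h2 : (b 1 : ℝ) < (a 1 : ℝ) + 1 := lt_trans hb1 ha2
  have h1' : a 1 < b 1 + 1 := by exact_mod_cast h1
  have h2' : b 1 < a 1 + 1 := by exact_mod_cast h2
  omega

private lemma cf_unique : ∀ (n : ℕ) (θ : ℝ) (a b : ℕ → ℕ), Irrational θ →
    Conv θ a → Conv θ b → a (n + 1) = b (n + 1)
  | 0, θ, a, b, hirr, ha, hb => cf_unique_one hirr ha hb
  | (n + 1), θ, a, b, hirr, ha, hb => by
      have e1 : a 1 = b 1 := cf_unique_one hirr ha hb
      have ta := conv_tail hirr ha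
      have tb := conv_tail hirr hb
      rw [e1] at ta
      have hirr' : Irrational (θ⁻¹ - b 1) := hirr.inv.sub_natCast _
      exact cf_unique n _ (sh a) (sh b) hirr' ta tb

/-- The transformed entry sequence in the case `a 1 ≥ 2`. -/
private def trA (a : ℕ → ℕ) : ℕ → ℕ :=
  fun n => if n ≤ 1 then 1 else if n = 2 then a 1 - 1 else a (n - 1)

/-- The transformed entry sequence in the case `a 1 = 1`. -/
private def trB (a : ℕ → ℕ) : ℕ → ℕ :=
  fun n => if n ≤ 1 then a 2 + 1 else a (n + 1)

private lemma trA_entry3 (a : ℕ → ℕ) (n : ℕ) : trA a (n + 3) = a (n + 2) := by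
  simp only [trA, if_neg (show ¬(n + 3 ≤ 1) by omega), if_neg (show ¬(n + 3 = 2) by omega)]
  have h : n + 3 - 1 = n + 2 := by omega
  rw [h]

private lemma trA_Q {a : ℕ → ℕ} (h1 : 1 ≤ a 1) :
    ∀ n, cfQ (trA a) (n + 2) = cfQ a (n + 1)
  | 0 => by
      show trA a 2 * cfQ (trA a) 1 + cfQ (trA a) 0 = a 1
      simp only [cfQ, trA]
      norm_num
      omega
  | 1 => by
      show trA a (0+3) * cfQ (trA a) (0+2) + cfQ (trA a) 1
          = a (0+2) * cfQ a (0+1) + cfQ a 0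
      rw [trA_Q h1 0, trA_entry3 a 0]
      simp [cfQ, trA]
  | (n + 2) => by
      show trA a (n+1+3) * cfQ (trA a) (n+1+2) + cfQ (trA a) (n+2)
          = a (n+1+2) * cfQ a (n+1+1) + cfQ a (n+1)
      rw [trA_Q h1 (n+1), trA_Q h1 n, trA_entry3 a (n+1)]

private lemma trA_P {a : ℕ → ℕ} (h1 : 1 ≤ a 1) :
    ∀ n, (cfP (trA a) (n + 1) : ℝ) = (cfQ a n : ℝ) - (cfP a n : ℝ)
  | 0 => by simp [cfP, cfQ]
  | 1 => by
      have h : cfP (trA a) (1+1) = a 1 - 1 := by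
        show trA a 2 * cfP (trA a) 1 + cfP (trA a) 0 = a 1 - 1
        simp [trA, cfP]
      rw [show ((1:ℕ)+1 : ℕ) = 2 from rfl] at h
      show (cfP (trA a) 2 : ℝ) = (cfQ a 1 : ℝ) - (cfP a 1 : ℝ)
      rw [h, Nat.cast_sub h1]
      simp [cfQ, cfP]
  | (n + 2) => by
      show ((trA a (n+1+2) * cfP (trA a) (n+1+1) + cfP (trA a) (n+1) : ℕ) : ℝ)
          = ((a (n+2) * cfQ a (n+1) + cfQ a n : ℕ) : ℝ)
            - ((a (n+2) * cfP a (n+1) + cfP a n : ℕ) : ℝ)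
      have hE : trA a (n+1+2) = a (n+2) := trA_entry3 a n
      push_cast
      rw [trA_P h1 (n+1), trA_P h1 n, hE]
      ring

private lemma trB_Q {a : ℕ → ℕ} (h1 : a 1 = 1) :
    ∀ n, cfQ (trB a) n = cfQ a (n + 1)
  | 0 => by simp [cfQ, h1]
  | 1 => by simp [cfQ, trB, h1]
  | (n + 2) => by
      show trB a (n+2) * cfQ (trB a) (n+1) + cfQ (trB a) n
          = a (n+1+2) * cfQ a (n+1+1) + cfQ a (n+1)
      have hE : trB a (n+2) = a (n+1+2) := by
        show (if n+2 ≤ 1 then a 2 + 1 else a ((n+2)+1)) = a (n+1+2)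
        rw [if_neg (by omega)]
      rw [trB_Q h1 (n+1), trB_Q h1 n, hE]

private lemma trB_P {a : ℕ → ℕ} (h1 : a 1 = 1) :
    ∀ n, (cfP (trB a) n : ℝ) = (cfQ a (n + 1) : ℝ) - (cfP a (n + 1) : ℝ)
  | 0 => by simp [cfP, cfQ, h1]
  | 1 => by
      show (cfP (trB a) 1 : ℝ) = (cfQ a 2 : ℝ) - (cfP a 2 : ℝ)
      simp only [cfP, cfQ, trB, h1]
      push_cast
      ring
  | (n + 2) => by
      show ((trB a (n+2) * cfP (trB a) (n+1) + cfP (trB a) n : ℕ) : ℝ)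
          = ((a (n+1+2) * cfQ a (n+1+1) + cfQ a (n+1) : ℕ) : ℝ)
            - ((a (n+1+2) * cfP a (n+1+1) + cfP a (n+1) : ℕ) : ℝ)
      have hE : trB a (n+2) = a (n+1+2) := by
        show (if n+2 ≤ 1 then a 2 + 1 else a ((n+2)+1)) = a (n+1+2)
        rw [if_neg (by omega)]
      push_cast
      rw [trB_P h1 (n+1), trB_P h1 n, hE]
      ring

private lemma trA_pos {a : ℕ → ℕ} (h : ∀ n, 1 ≤ n → 1 ≤ a n) (h2 : 2 ≤ a 1) :
    ∀ n, 1 ≤ n → 1 ≤ trA a n := by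
  intro n hn
  simp only [trA]
  split
  · exact le_rfl
  · split
    · omega
    · exact h (n - 1) (by omega)

private lemma trB_pos {a : ℕ → ℕ} (h : ∀ n, 1 ≤ n → 1 ≤ a n) :
    ∀ n, 1 ≤ n → 1 ≤ trB a n := by
  intro n hn
  simp only [trB]
  split
  · omega
  · exact h (n + 1) (by omega)

private lemma conv_trA {θ : ℝ} {a : ℕ → ℕ} (h : Conv θ a) (h2 : 2 ≤ a 1) :
    Conv (1 - θ) (trA a) := by
  refine ⟨trA_pos h.1 h2, ?_⟩
  rw [← tendsto_add_atTop_iff_nat 2]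
  have key : ∀ n, (cfP (trA a) (n + 2) : ℝ) / (cfQ (trA a) (n + 2) : ℝ)
      = 1 - (cfP a (n + 1) : ℝ) / (cfQ a (n + 1) : ℝ) := by
    intro n
    have hq := cfQ_pos h.1 (n + 1)
    rw [trA_Q (by omega) n, show n + 2 = (n + 1) + 1 from rfl, trA_P (by omega) (n + 1)]
    field_simp
  have hc : Tendsto (fun n => 1 - (cfP a (n + 1) : ℝ) / (cfQ a (n + 1) : ℝ)) atTop
      (nhds (1 - θ)) := tendsto_const_nhds.sub ((tendsto_add_atTop_iff_nat 1).2 h.2)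
  exact hc.congr fun n => (key n).symm

private lemma conv_trB {θ : ℝ} {a : ℕ → ℕ} (h : Conv θ a) (h1 : a 1 = 1) :
    Conv (1 - θ) (trB a) := by
  refine ⟨trB_pos h.1, ?_⟩
  have key : ∀ n, (cfP (trB a) n : ℝ) / (cfQ (trB a) n : ℝ)
      = 1 - (cfP a (n + 1) : ℝ) / (cfQ a (n + 1) : ℝ) := by
    intro n
    have hq := cfQ_pos h.1 (n + 1)
    rw [trB_Q h1 n, trB_P h1 n]
    field_simp
  have hc : Tendsto (fun n => 1 - (cfP a (n + 1) : ℝ) / (cfQ a (n + 1) : ℝ)) atTop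
      (nhds (1 - θ)) := tendsto_const_nhds.sub ((tendsto_add_atTop_iff_nat 1).2 h.2)
  exact hc.congr fun n => (key n).symm

private lemma Acf_congr {a b : ℕ → ℕ} (h : ∀ n, 1 ≤ n → a n = b n) (α : ℝ) :
    Acf a α = Acf b α := by
  unfold Acf
  refine limsup_congr (Eventually.of_forall fun n => ?_)
  rw [h (n + 1) (by omega), cfQ_congr h n]

private lemma Acf_trA {a : ℕ → ℕ} (h1 : 2 ≤ a 1) (α : ℝ) :
    Acf (trA a) α = Acf a α := by
  unfold Acf
  set f : ℕ → ENNReal := fun n => (a (n + 1) : ENNReal) * (cfQ a n : ENNReal) ^ (1 - α)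
    with hf
  set g : ℕ → ENNReal := fun n => (trA a (n + 1) : ENNReal) * (cfQ (trA a) n : ENNReal) ^ (1 - α)
    with hg
  have e : ∀ n, g (n + 2) = f (n + 1) := by
    intro n
    simp only [hf, hg]
    rw [show (n + 2) + 1 = n + 3 from rfl, trA_entry3, trA_Q (by omega) n]
  calc limsup g atTop = limsup (fun n => g (n + 2)) atTop := (limsup_nat_add g 2).symm
    _ = limsup (fun n => f (n + 1)) atTop := limsup_congr (Eventually.of_forall e)
    _ = limsup f atTop := limsup_nat_add f 1

private lemma Acf_trB {a : ℕ → ℕ} (h1 : a 1 = 1) (α : ℝ) :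
    Acf (trB a) α = Acf a α := by
  unfold Acf
  set f : ℕ → ENNReal := fun n => (a (n + 1) : ENNReal) * (cfQ a n : ENNReal) ^ (1 - α)
    with hf
  set g : ℕ → ENNReal := fun n => (trB a (n + 1) : ENNReal) * (cfQ (trB a) n : ENNReal) ^ (1 - α)
    with hg
  have e : ∀ n, g (n + 1) = f (n + 2) := by
    intro n
    simp only [hf, hg]
    rw [show trB a ((n + 1) + 1) = a (n + 3) by simp [trB], trB_Q h1 (n + 1)]
  calc limsup g atTop = limsup (fun n => g (n + 1)) atTop := (limsup_nat_add g 1).symm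
    _ = limsup (fun n => f (n + 2)) atTop := limsup_congr (Eventually.of_forall e)
    _ = limsup f atTop := limsup_nat_add f 2

private lemma Acf_main {θ : ℝ} {a b : ℕ → ℕ} (α : ℝ)
    (hcf : IsCF θ a) (hcf' : IsCF (1 - θ) b) : Acf a α = Acf b α := by
  obtain ⟨hirr, hpos, hlim⟩ := hcf
  obtain ⟨hirr', hpos', hlim'⟩ := hcf'
  have ha : Conv θ a := ⟨hpos, hlim⟩
  have hb : Conv (1 - θ) b := ⟨hpos', hlim'⟩
  have h1 := hpos 1 le_rfl
  rcases eq_or_lt_of_le h1 with heq | hlt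
  · -- a 1 = 1
    have h1' : a 1 = 1 := heq.symm
    have hb' : Conv (1 - θ) (trB a) := conv_trB ha h1'
    have hbe : ∀ n, 1 ≤ n → b n = trB a n := by
      intro n hn
      obtain ⟨m, rfl⟩ : ∃ m, n = m + 1 := ⟨n - 1, by omega⟩
      exact cf_unique m _ b (trB a) hirr' hb hb'
    rw [Acf_congr hbe α, Acf_trB h1' α]
  · -- 2 ≤ a 1
    have h2 : 2 ≤ a 1 := hlt
    have hb' : Conv (1 - θ) (trA a) := conv_trA ha h2
    have hbe : ∀ n, 1 ≤ n → b n = trA a n := by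
      intro n hn
      obtain ⟨m, rfl⟩ : ∃ m, n = m + 1 := ⟨n - 1, by omega⟩
      exact cf_unique m _ b (trA a) hirr' hb hb'
    rw [Acf_congr hbe α, Acf_trA h2 α]

/-- `A_α(θ) < ∞ ↔ A_α(1-θ) < ∞` and `A_α(θ) > 0 ↔ A_α(1-θ) > 0`. -/
theorem stmt1 (θ : ℝ) (a b : ℕ → ℕ) (α : ℝ) (hα : 1 ≤ α)
    (hcf : IsCF θ a) (hcf' : IsCF (1 - θ) b) :
    (Acf a α < ⊤ ↔ Acf b α < ⊤) ∧ (0 < Acf a α ↔ 0 < Acf b α) := by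
  rw [Acf_main α hcf hcf']
  exact ⟨Iff.rfl, Iff.rfl⟩

end CFPaper
end

section
/- Let τ and ρ be the monoid homomorphisms on {0,1}* determined by τ(0) = (0), τ(1) = (1,0), ρ(0) = (0,1), ρ(1) = (1). For irrational θ = [0; a₁+1, a₂, ...] ∈ [0,1/2], define R₀ = (0), L₀ = (1), and for k ≥ 1, R_k = τ^{a₁} ρ^{a₂} ⋯ τ^{a_{2k-1}} ρ^{a_{2k}}(0) and L_k = τ^{a₁} ρ^{a₂} ⋯ τ^{a_{2k-1}} ρ^{a_{2k}}(1). Then for all k ≥ 1: |R_k| = q_{2k}, |L_k| = q_{2k-1}, R_k = R_{k-1} (L_k)^{a_{2k}}, and L_k = L_{k-1} (R_{k-1})^{a_{2k-1}}, where qₙ are the continued fraction denominators of θ. -/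
open Filter Topology MeasureTheory

namespace CFPaper

lemma join_cons' (x : List Bool) (l : List (List Bool)) :
    (x :: l).flatten = x ++ l.flatten := List.flatten_cons

lemma tauW_append (u v : List Bool) : tauW (u ++ v) = tauW u ++ tauW v := by
  simp [tauW]

lemma rhoW_append (u v : List Bool) : rhoW (u ++ v) = rhoW u ++ rhoW v := by
  simp [rhoW]

lemma tauW_iter_append (m : ℕ) (u v : List Bool) :
    tauW^[m] (u ++ v) = tauW^[m] u ++ tauW^[m] v := by
  induction m generalizing u v with
  | zero => simp
  | succ m ih => simp [Function.iterate_succ_apply, tauW_append, ih]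

lemma rhoW_iter_append (m : ℕ) (u v : List Bool) :
    rhoW^[m] (u ++ v) = rhoW^[m] u ++ rhoW^[m] v := by
  induction m generalizing u v with
  | zero => simp
  | succ m ih => simp [Function.iterate_succ_apply, rhoW_append, ih]

lemma stageW_append (a : ℕ → ℕ) (k : ℕ) (u v : List Bool) :
    stageW a k (u ++ v) = stageW a k u ++ stageW a k v := by
  induction k generalizing u v with
  | zero => simp [stageW]
  | succ k ih => simp [stageW, rhoW_iter_append, tauW_iter_append, ih]

lemma stageW_nil (a : ℕ → ℕ) (k : ℕ) : stageW a k [] = [] := by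
  induction k with
  | zero => simp [stageW]
  | succ k ih =>
    simp only [stageW, Function.comp_apply]
    have ht : ∀ m, tauW^[m] ([] : List Bool) = [] := by
      intro m
      induction m with
      | zero => simp
      | succ m ihm => simp [Function.iterate_succ_apply, tauW, ihm]
    have hr : ∀ m, rhoW^[m] ([] : List Bool) = [] := by
      intro m
      induction m with
      | zero => simp
      | succ m ihm => simp [Function.iterate_succ_apply, rhoW, ihm]
    rw [hr, ht, ih]

lemma stageW_join_replicate (a : ℕ → ℕ) (k p : ℕ) (w : List Bool) :
    stageW a k (List.replicate p w).flatten =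
      (List.replicate p (stageW a k w)).flatten := by
  induction p with
  | zero => simpa using stageW_nil a k
  | succ p ih =>
    rw [List.replicate_succ, List.replicate_succ, join_cons', join_cons',
      stageW_append, ih]

lemma rhoW_iter_true (m : ℕ) : rhoW^[m] [true] = [true] := by
  induction m with
  | zero => rfl
  | succ m ih => simp [Function.iterate_succ_apply, rhoW]; exact ih

lemma rhoW_join_replicate_true (m : ℕ) :
    rhoW (List.replicate m [true]).flatten = (List.replicate m [true]).flatten := by
  induction m with
  | zero => rfl
  | succ n ihn =>
    rw [List.replicate_succ, join_cons', rhoW_append, ihn]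
    rfl

lemma tauW_join_replicate_false (m : ℕ) :
    tauW (List.replicate m [false]).flatten = (List.replicate m [false]).flatten := by
  induction m with
  | zero => rfl
  | succ n ihn =>
    rw [List.replicate_succ, join_cons', tauW_append, ihn]
    rfl

lemma rhoW_iter_false (m : ℕ) :
    rhoW^[m] [false] = [false] ++ (List.replicate m [true]).flatten := by
  induction m with
  | zero => rfl
  | succ m ih =>
    rw [Function.iterate_succ_apply', ih, rhoW_append]
    have h1 : rhoW [false] = [false, true] := rfl
    rw [h1, rhoW_join_replicate_true, List.replicate_succ, join_cons']
    simp

lemma tauW_iter_true (m : ℕ) :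
    tauW^[m] [true] = [true] ++ (List.replicate m [false]).flatten := by
  induction m with
  | zero => rfl
  | succ m ih =>
    rw [Function.iterate_succ_apply', ih, tauW_append]
    have h1 : tauW [true] = [true, false] := rfl
    rw [h1, tauW_join_replicate_false, List.replicate_succ, join_cons']
    simp

lemma tauW_iter_false (m : ℕ) : tauW^[m] [false] = [false] := by
  induction m with
  | zero => rfl
  | succ n ihn => simp [Function.iterate_succ_apply, tauW, ihn]

/-- Key identity: `L_{k+1} = L_k (R_k)^{a_{2k+1}}`. -/
lemma Lw_succ (a : ℕ → ℕ) (k : ℕ) :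
    Lw a (k+1) = Lw a k ++ (List.replicate (a (2*k+1)) (Rw a k)).flatten := by
  have : Lw a (k+1) = stageW a k (tauW^[a (2*k+1)] (rhoW^[a (2*k+2)] [true])) := rfl
  rw [this, rhoW_iter_true, tauW_iter_true, stageW_append, stageW_join_replicate]
  rfl

/-- Key identity: `R_{k+1} = R_k (L_{k+1})^{a_{2k+2}}`. -/
lemma Rw_succ (a : ℕ → ℕ) (k : ℕ) :
    Rw a (k+1) = Rw a k ++ (List.replicate (a (2*k+2)) (Lw a (k+1))).flatten := by
  have h : Rw a (k+1) = stageW a k (tauW^[a (2*k+1)] (rhoW^[a (2*k+2)] [false])) := rfl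
  rw [h, rhoW_iter_false, tauW_iter_append]
  have hT : ∀ m, tauW^[a (2*k+1)] (List.replicate m [true]).flatten =
      (List.replicate m (tauW^[a (2*k+1)] [true])).flatten := by
    intro m
    induction m with
    | zero =>
      simp
      induction (a (2*k+1)) with
      | zero => simp
      | succ n ihn => simp [Function.iterate_succ_apply, tauW, ihn]
    | succ m ihm =>
      rw [List.replicate_succ, join_cons', tauW_iter_append, ihm,
        List.replicate_succ, join_cons']
  rw [hT, tauW_iter_false, stageW_append, stageW_join_replicate]
  have hL : stageW a k (tauW^[a (2*k+1)] [true]) = Lw a (k+1) := by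
    have h2 : Lw a (k+1) = stageW a k (tauW^[a (2*k+1)] (rhoW^[a (2*k+2)] [true])) := rfl
    rw [h2, rhoW_iter_true]
  rw [hL]
  rfl

lemma length_join_replicate (p : ℕ) (w : List Bool) :
    ((List.replicate p w).flatten).length = p * w.length := by
  induction p with
  | zero => simp
  | succ p ih => rw [List.replicate_succ, join_cons', List.length_append, ih]; ring

lemma lengths (a : ℕ → ℕ) :
    ∀ k, (Rw a k).length = cfQ (fun n => if n = 1 then a 1 + 1 else a n) (2*k) ∧
      (Lw a (k+1)).length = cfQ (fun n => if n = 1 then a 1 + 1 else a n) (2*k+1) := by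
  set b := fun n => if n = 1 then a 1 + 1 else a n with hb
  intro k
  induction k with
  | zero =>
    constructor
    · simp [Rw, stageW, cfQ]
    · rw [Lw_succ, List.length_append, length_join_replicate]
      have hL0 : Lw a 0 = [true] := rfl
      have hR0 : Rw a 0 = [false] := rfl
      rw [hL0, hR0]
      simp [cfQ, hb]
      omega
  | succ k ih =>
    obtain ⟨ihR, ihL⟩ := ih
    have hb2 : b (2*k+2) = a (2*k+2) := by
      simp only [hb]; exact if_neg (by omega)
    have hb3 : b (2*k+1+2) = a (2*(k+1)+1) := by
      have h : 2*k+1+2 = 2*(k+1)+1 := by ring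
      rw [h]; simp only [hb]; exact if_neg (by omega)
    have hR : (Rw a (k+1)).length = cfQ b (2*(k+1)) := by
      have h2 : 2*(k+1) = (2*k) + 2 := by ring
      rw [Rw_succ, List.length_append, length_join_replicate, ihR, ihL, h2, cfQ, hb2]
      ring
    refine ⟨hR, ?_⟩
    rw [Lw_succ, List.length_append, length_join_replicate, ihL, hR]
    have h2 : 2*(k+1)+1 = (2*k+1) + 2 := by ring
    have h3 : 2*k+1+1 = 2*(k+1) := by ring
    rw [h2, cfQ, hb3, h3]
    ring

/-- for θ = [0; a₁+1, a₂, …] ∈ [0,1/2] irrational and all k ≥ 1: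
`|R_k| = q_{2k}`, `|L_k| = q_{2k-1}`, `R_k = R_{k-1} (L_k)^{a_{2k}}` and
`L_k = L_{k-1} (R_{k-1})^{a_{2k-1}}`. -/
theorem stmt4 (θ : ℝ) (a : ℕ → ℕ) (ha : ∀ n, 1 ≤ n → 1 ≤ a n)
    (hθ : θ ∈ Set.Icc (0:ℝ) (1/2))
    (hcf : IsCF θ (fun n => if n = 1 then a 1 + 1 else a n)) :
    ∀ k, 1 ≤ k →
      (Rw a k).length = cfQ (fun n => if n = 1 then a 1 + 1 else a n) (2*k) ∧
      (Lw a k).length = cfQ (fun n => if n = 1 then a 1 + 1 else a n) (2*k - 1) ∧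
      Rw a k = Rw a (k-1) ++ (List.replicate (a (2*k)) (Lw a k)).flatten ∧
      Lw a k = Lw a (k-1) ++ (List.replicate (a (2*k-1)) (Rw a (k-1))).flatten := by
  intro k hk
  obtain ⟨j, rfl⟩ : ∃ j, k = j + 1 := ⟨k-1, by omega⟩
  have h1 := (lengths a (j+1)).1
  have h2 := (lengths a j).2
  have e1 : 2*(j+1) - 1 = 2*j + 1 := by omega
  have e2 : 2*(j+1) = 2*j + 2 := by omega
  have e3 : j + 1 - 1 = j := by omega
  refine ⟨h1, ?_, ?_, ?_⟩
  · rw [e1]; exact h2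
  · rw [e2, e3]; exact Rw_succ a j
  · rw [e1, e3]; exact Lw_succ a j

end CFPaper
end

section
/- A Sturmian subshift X of slope θ is 1-repulsive if and only if it is repulsive. -/
open Filter Topology MeasureTheory

namespace CFPaper

private lemma irr_mul_nat {θ : ℝ} (hθ : Irrational θ) {m : ℕ} (hm : m ≠ 0) :
    Irrational (θ * (m : ℝ)) := by
  simpa [mul_comm] using hθ.natCast_mul hm

private lemma fract_pos_of_irr {y : ℝ} (hy : Irrational y) : 0 < Int.fract y := by
  rcases (Int.fract_nonneg y).lt_or_eq with h | h
  · exact h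
  · exfalso
    have h2 := Int.fract_add_floor y
    rw [← h, zero_add] at h2
    exact hy.ne_int ⌊y⌋ h2.symm

private lemma ceil_shift {θ : ℝ} (hθ : Irrational θ) {p m : ℕ} (hp : 1 ≤ p) (hm : 1 ≤ m)
    (h : |θ * (p : ℝ) - round (θ * (p : ℝ))| ≤ |θ * (m : ℝ) - round (θ * (m : ℝ))|) :
    ⌈θ * ((m + p : ℕ) : ℝ)⌉ = ⌈θ * (m : ℝ)⌉ + round (θ * (p : ℝ)) := by
  set y : ℝ := θ * (m : ℝ) with hy
  set P : ℤ := round (θ * (p : ℝ)) with hP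
  set δ : ℝ := θ * (p : ℝ) - P with hδ
  have hiy : Irrational y := irr_mul_nat hθ (by omega)
  have hip : Irrational (θ * (p : ℝ)) := irr_mul_nat hθ (by omega)
  have himp : Irrational (θ * ((m + p : ℕ) : ℝ)) := irr_mul_nat hθ (by omega)
  have hiyδ : Irrational (y + δ) := by
    have h2 : y + δ = θ * ((m + p : ℕ) : ℝ) - (P : ℝ) := by push_cast; ring
    rw [h2]; exact himp.sub_intCast P
  have hmp : θ * ((m + p : ℕ) : ℝ) = y + δ + (P : ℝ) := by push_cast; ring
  rw [hmp, Int.ceil_add_intCast]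
  congr 1
  have hfr : |δ| ≤ min (Int.fract y) (1 - Int.fract y) := by
    rw [← abs_sub_round_eq_min]; exact h
  have hf1 : |δ| ≤ Int.fract y := hfr.trans (min_le_left _ _)
  have hf2 : |δ| ≤ 1 - Int.fract y := hfr.trans (min_le_right _ _)
  have hfy0 : Int.fract y ≠ 0 := (fract_pos_of_irr hiy).ne'
  have hceil : (⌈y⌉ : ℝ) = y + 1 - Int.fract y := Int.ceil_eq_add_one_sub_fract hfy0
  have hδ0 : δ ≠ 0 := sub_ne_zero.mpr (hip.ne_int P)
  rcases hδ0.lt_or_gt with hneg | hpos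
  · -- δ < 0
    refine le_antisymm (Int.ceil_le_ceil (by linarith)) ?_
    rw [Int.le_ceil_iff]
    have hne : Int.fract y ≠ -δ := by
      intro hcon
      apply hiyδ.ne_int ⌊y⌋
      have := Int.fract_add_floor y
      push_cast
      linarith [Int.fract_add_floor y]
    have hf1' : -δ ≤ Int.fract y := by rw [abs_of_neg hneg] at hf1; exact hf1
    have : -δ < Int.fract y := by
      rcases hf1'.lt_or_eq with h' | h'
      · exact h'
      · exact absurd h'.symm hne
    rw [hceil]; linarith
  · -- δ > 0
    refine le_antisymm ?_ (Int.ceil_le_ceil (by linarith))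
    rw [Int.ceil_le, hceil]
    rw [abs_of_pos hpos] at hf2
    linarith

private lemma rot_period {θ : ℝ} (hθ : Irrational θ) {p : ℕ} (hp : 2 ≤ p)
    (hrec : ∀ m : ℕ, 1 ≤ m → m ≤ p →
      |θ * (p : ℝ) - round (θ * (p : ℝ))| ≤ |θ * (m : ℝ) - round (θ * (m : ℝ))|)
    {j : ℕ} (hj1 : 1 ≤ j) (hj2 : j + 1 ≤ p) :
    rotWord θ (j + p) = rotWord θ j := by
  have h1 := ceil_shift hθ (by omega : 1 ≤ p) hj1 (hrec j hj1 (by omega))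
  have h2 := ceil_shift hθ (by omega : 1 ≤ p) (by omega : 1 ≤ j + 1) (hrec (j+1) (by omega) hj2)
  unfold rotWord
  have e1 : θ * (((j + p : ℕ) : ℝ) + 1) = θ * (((j + 1) + p : ℕ) : ℝ) := by push_cast; ring
  have e2 : θ * ((j : ℝ) + 1) = θ * (((j + 1) : ℕ) : ℝ) := by push_cast; ring
  rw [e1, e2, h1, h2]
  have : ⌈θ * (((j+1 : ℕ)) : ℝ)⌉ + round (θ * (p : ℝ)) - (⌈θ * ((j : ℕ) : ℝ)⌉ + round (θ * (p : ℝ)))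
      = ⌈θ * (((j+1 : ℕ)) : ℝ)⌉ - ⌈θ * ((j : ℕ) : ℝ)⌉ := by ring
  rw [this]

private lemma g_pos {θ : ℝ} (hθ : Irrational θ) {m : ℕ} (hm : 1 ≤ m) :
    0 < |θ * (m : ℝ) - round (θ * (m : ℝ))| := by
  have h1 : Irrational (θ * (m : ℝ)) := irr_mul_nat hθ (by omega)
  exact abs_pos.mpr (sub_ne_zero.mpr (h1.ne_int _))

private lemma exists_record {θ : ℝ} (hθ : Irrational θ) (T : ℕ) :
    ∃ p : ℕ, T < p ∧ ∀ m : ℕ, 1 ≤ m → m ≤ p →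
      |θ * (p : ℝ) - round (θ * (p : ℝ))| ≤ |θ * (m : ℝ) - round (θ * (m : ℝ))| := by
  set g : ℕ → ℝ := fun m => |θ * (m : ℝ) - round (θ * (m : ℝ))| with hg
  have hne : (Finset.Icc 1 (max T 1)).Nonempty := ⟨1, Finset.mem_Icc.mpr (by omega)⟩
  set c : ℝ := (Finset.Icc 1 (max T 1)).inf' hne g with hc
  have hcpos : 0 < c := by
    obtain ⟨b, hb, hbe⟩ := Finset.exists_mem_eq_inf' hne g
    rw [hc, hbe]
    simp only [Finset.mem_Icc] at hb
    exact g_pos hθ hb.1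
  obtain ⟨n, hn⟩ := exists_nat_one_div_lt hcpos
  -- Dirichlet with n+1
  obtain ⟨j, k, hk0, hkn, hjk⟩ := Real.exists_int_int_abs_mul_sub_le θ (n := n + 1) (by omega)
  set d : ℕ := k.toNat with hd
  have hdk : (d : ℝ) = (k : ℝ) := by
    rw [hd]; exact_mod_cast congrArg Int.cast (Int.toNat_of_nonneg hk0.le)
  have hd1 : 1 ≤ d := by omega
  have hdn : d ≤ n + 1 := by omega
  have hgd : g d < c := by
    have h1 : g d ≤ |θ * (d : ℝ) - (j : ℝ)| := round_le _ j
    have h2 : |θ * (d : ℝ) - (j : ℝ)| = |(k : ℝ) * θ - (j : ℝ)| := by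
      rw [hdk, mul_comm]
    calc g d ≤ |(k:ℝ) * θ - (j:ℝ)| := by rw [← h2]; exact h1
      _ ≤ 1 / ((n + 1 : ℕ) + 1 : ℝ) := by exact_mod_cast hjk
      _ ≤ 1 / ((n : ℝ) + 1) := by
          apply div_le_div_of_nonneg_left one_pos.le (by positivity)
          push_cast; linarith
      _ < c := hn
  have hne2 : (Finset.Icc 1 (n + 1)).Nonempty := ⟨1, Finset.mem_Icc.mpr (by omega)⟩
  obtain ⟨p, hpmem, hpeq⟩ := Finset.exists_mem_eq_inf' hne2 g
  simp only [Finset.mem_Icc] at hpmem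
  have hpmin : ∀ m : ℕ, 1 ≤ m → m ≤ n + 1 → g p ≤ g m := by
    intro m h1 h2
    rw [← hpeq]
    exact Finset.inf'_le g (Finset.mem_Icc.mpr (by omega))
  have hgp : g p < c := (hpmin d hd1 hdn).trans_lt hgd
  have hpT : T < p := by
    by_contra hcon
    push_neg at hcon
    have : c ≤ g p := Finset.inf'_le g (Finset.mem_Icc.mpr (by omega))
    linarith
  exact ⟨p, hpT, fun m h1 h2 => hpmin m h1 (h2.trans hpmem.2)⟩



private lemma rot_mem_sturmian (θ : ℝ) : rotWord θ ∈ sturmian θ :=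
  subset_closure ⟨0, by simp⟩

private lemma window_mem (θ : ℝ) (s n : ℕ) :
    ((List.range n).map fun i => rotWord θ (s + i)) ∈ Lang (sturmian θ) := by
  refine ⟨rotWord θ, rot_mem_sturmian θ, s, ?_⟩
  simp

private lemma repA_le_two {θ : ℝ} (hθ : Irrational θ) {p : ℕ} (hp : 2 ≤ p)
    (hrec : ∀ m : ℕ, 1 ≤ m → m ≤ p →
      |θ * (p : ℝ) - round (θ * (p : ℝ))| ≤ |θ * (m : ℝ) - round (θ * (m : ℝ))|) :
    repA (sturmian θ) 1 (p + (p - 1)) ≤ 2 := by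
  set f : ℕ → Bool := fun i => rotWord θ (1 + i) with hf
  set w : List Bool := (List.range (p - 1)).map f with hw
  set W : List Bool := (List.range (p + (p - 1))).map f with hW
  have hwl : w.length = p - 1 := by simp [hw]
  have hWl : W.length = p + (p - 1) := by simp [hW]
  have hpre : w <+: W := by
    have h1 : (List.range (p + (p - 1))).take (p - 1) = List.range (p - 1) := by
      rw [List.take_range]
      congr 1
      omega
    rw [hw, hW]
    exact List.IsPrefix.map f (h1 ▸ List.take_prefix (p - 1) (List.range (p + (p - 1))))
  have hsuf : w <:+ W := by
    refine ⟨(List.range p).map f, ?_⟩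
    rw [hw, hW, List.range_add, List.map_append, List.map_map]
    congr 1
    refine List.map_congr_left fun i hi => ?_
    simp only [List.mem_range] at hi
    show rotWord θ (1 + i) = rotWord θ (1 + (p + i))
    have hper := rot_period hθ hp hrec (j := 1 + i) (by omega) (by omega)
    have e : 1 + (p + i) = (1 + i) + p := by omega
    rw [e, hper]
  have hps : PSPair (sturmian θ) w W := by
    refine ⟨window_mem θ 1 (p - 1), window_mem θ 1 (p + (p - 1)), hpre, hsuf, ?_, ?_⟩
    · intro hcon
      have := congrArg List.length hcon
      rw [hwl, hWl] at this
      omega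
    · intro hcon
      have := congrArg List.length hcon
      rw [hwl] at this
      simp at this
      omega
  have hmem : ((p : ENNReal)) / (((p - 1 : ℕ) : ENNReal)) ∈
      {r | ∃ w' W', PSPair (sturmian θ) w' W' ∧ W'.length = p + (p - 1) ∧
        r = ((W'.length - w'.length : ℕ) : ENNReal) / ((w'.length : ENNReal) ^ (1/(1:ℝ)))} := by
    refine ⟨w, W, hps, hWl, ?_⟩
    rw [hwl, hWl]
    have h11 : (1 : ℝ)/1 = 1 := by norm_num
    rw [h11, ENNReal.rpow_one]
    congr 2
    omega
  refine le_trans (sInf_le hmem) ?_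
  refine ENNReal.div_le_of_le_mul ?_
  have hcast : ((p : ℕ) : ENNReal) ≤ ((2 * (p - 1) : ℕ) : ENNReal) := Nat.cast_le.mpr (by omega)
  refine le_trans hcast (le_of_eq ?_)
  push_cast
  ring

/-- a Sturmian subshift is 1-repulsive iff it is repulsive. -/
theorem stmt5 (θ : ℝ) (hθ : Irrational θ) (hθ' : θ ∈ Set.Icc (0:ℝ) 1) :
    (0 < ellCf (sturmian θ) 1 ∧ ellCf (sturmian θ) 1 < ⊤) ↔ 0 < ellRep (sturmian θ) := by
  constructor
  · rintro ⟨h1, -⟩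
    by_contra hcon
    have h0 : ellRep (sturmian θ) = 0 := by
      rcases eq_or_ne (ellRep (sturmian θ)) 0 with h | h
      · exact h
      · exact absurd (pos_iff_ne_zero.mpr h) hcon
    have hzero : ellCf (sturmian θ) 1 = 0 := by
      refine le_antisymm ?_ (zero_le)
      refine ENNReal.le_of_forall_pos_le_add fun ε hε _ => ?_
      rw [zero_add]
      refine Filter.liminf_le_of_frequently_le ?_
      rw [Filter.frequently_atTop]
      intro N
      have hmin : (0 : ENNReal) < min (ε : ENNReal) (1 / ((N : ENNReal) + 1)) := by
        refine lt_min (by exact_mod_cast hε) ?_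
        rw [one_div, ENNReal.inv_pos]
        exact ENNReal.add_ne_top.mpr ⟨ENNReal.natCast_ne_top N, ENNReal.one_ne_top⟩
      have hlt : ellRep (sturmian θ) < min (ε : ENNReal) (1 / ((N : ENNReal) + 1)) := by
        rw [h0]; exact hmin
      obtain ⟨t, htmem, htlt⟩ := sInf_lt_iff.mp hlt
      obtain ⟨w, W, hps, rfl⟩ := htmem
      have hwlen : 1 ≤ w.length := by
        have hne := hps.2.2.2.2.2
        cases w with
        | nil => exact absurd rfl hne
        | cons a l => simp
      have hlt' : w.length < W.length := by
        rcases (hps.2.2.1).length_le.lt_or_eq with h' | h'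
        · exact h'
        · exact absurd ((hps.2.2.1).eq_of_length h') (fun hh => hps.2.2.2.2.1 hh.symm)
      have hd1 : 1 ≤ W.length - w.length := by omega
      have hNlt : N < w.length := by
        by_contra hc
        push_neg at hc
        have hge : 1 / ((N : ENNReal) + 1) ≤
            ((W.length - w.length : ℕ) : ENNReal) / ((w.length : ENNReal)) := by
          refine ENNReal.div_le_div ?_ ?_
          · exact_mod_cast hd1
          · exact le_trans (by exact_mod_cast hc : ((w.length : ℕ) : ENNReal) ≤ (N : ENNReal))
              le_self_add
        exact absurd (hge.trans_lt (htlt.trans_le (min_le_right _ _))) (lt_irrefl _)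
      refine ⟨W.length, by omega, ?_⟩
      have hmem2 : ((W.length - w.length : ℕ) : ENNReal) / ((w.length : ENNReal)) ∈
          {r | ∃ w' W', PSPair (sturmian θ) w' W' ∧ W'.length = W.length ∧
            r = ((W'.length - w'.length : ℕ) : ENNReal) /
              ((w'.length : ENNReal) ^ (1/(1:ℝ)))} := by
        refine ⟨w, W, hps, rfl, ?_⟩
        norm_num
      refine le_trans (sInf_le hmem2) ?_
      exact le_of_lt (htlt.trans_le (min_le_left _ _))
    rw [hzero] at h1
    exact absurd h1 (lt_irrefl 0)
  · intro h
    constructor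
    · refine lt_of_lt_of_le h ?_
      refine Filter.le_liminf_of_le (by isBoundedDefault) ?_
      refine Filter.Eventually.of_forall fun n => ?_
      refine sInf_le_sInf ?_
      rintro r ⟨w, W, hps, -, rfl⟩
      refine ⟨w, W, hps, ?_⟩
      norm_num
    · refine lt_of_le_of_lt ?_ (by norm_num : (2 : ENNReal) < ⊤)
      refine Filter.liminf_le_of_frequently_le ?_
      rw [Filter.frequently_atTop]
      intro N
      obtain ⟨p, hpT, hrec⟩ := exists_record hθ (N + 2)
      exact ⟨p + (p - 1), by omega, repA_le_two hθ (by omega) hrec⟩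


end CFPaper
end

section
/- Let Y be a subshift and 1 ≤ α < β. If 0 < ℓ_β < ∞ (i.e., Y is β-repulsive), then ℓ_α = 0. -/
open Filter Topology MeasureTheory

namespace CFPaper

/-- if `1 ≤ α < β` and `Y` is β-repulsive, then `ℓ_α = 0`. -/
theorem stmt6 (Y : Set (ℕ → Bool)) (hY : IsSubshift Y) (α β : ℝ)
    (h1 : 1 ≤ α) (hab : α < β)
    (hpairs : ∀ N : ℕ, ∃ n, N ≤ n ∧ ∃ w W, PSPair Y w W ∧ W.length = n)
    (hβ : 0 < ellCf Y β ∧ ellCf Y β < ⊤) :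
    ellCf Y α = 0 := by
  obtain ⟨-, hfin⟩ := hβ
  set C : ENNReal := ellCf Y β + 1 with hCdef
  have hCne : C ≠ ⊤ := by
    simp [hCdef, ENNReal.add_eq_top, hfin.ne]
  have hfreq : ∃ᶠ n in atTop, repA Y β n < C :=
    frequently_lt_of_liminf_lt (by isBoundedDefault)
      (ENNReal.lt_add_right hfin.ne one_ne_zero)
  have hα0 : (0:ℝ) < α := lt_of_lt_of_le one_pos h1
  have hβ0 : (0:ℝ) < β := lt_trans hα0 hab
  have hδ : 1/β - 1/α < 0 := sub_neg.mpr (one_div_lt_one_div_of_lt hα0 hab)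
  refine le_antisymm ?_ (zero_le)
  refine ENNReal.le_of_forall_pos_le_add fun ε hε _ => ?_
  rw [zero_add]
  refine liminf_le_of_frequently_le' ?_
  -- C * m ^ (1/β - 1/α) tends to 0 as m → ∞
  have htend : Tendsto (fun m : ℕ => C * (m:ENNReal) ^ (1/β - 1/α)) atTop (𝓝 0) := by
    have h1' : Tendsto (fun m : ℕ => ((m:ENNReal) ^ (-(1/β - 1/α)))⁻¹) atTop (𝓝 0) := by
      rw [← ENNReal.inv_top]
      exact ENNReal.tendsto_inv_iff.2
        ((ENNReal.tendsto_rpow_at_top (by linarith)).comp ENNReal.tendsto_nat_nhds_top)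
    have h2' : (fun m : ℕ => ((m:ENNReal) ^ (-(1/β - 1/α)))⁻¹)
        = fun m : ℕ => (m:ENNReal) ^ (1/β - 1/α) := by
      funext m; rw [← ENNReal.rpow_neg, neg_neg]
    rw [h2'] at h1'
    simpa using (ENNReal.Tendsto.const_mul h1' (Or.inr hCne))
  have hεpos : (0:ENNReal) < (ε:ENNReal) := by exact_mod_cast hε
  obtain ⟨M, hM⟩ := eventually_atTop.1 (htend.eventually_lt_const hεpos)
  -- threshold for n
  set B : ENNReal := C * (M:ENNReal) ^ (1/β) with hBdef
  have hBne : B ≠ ⊤ :=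
    ENNReal.mul_ne_top hCne
      (ENNReal.rpow_ne_top_of_nonneg (by positivity) (ENNReal.natCast_ne_top M))
  set N₀ : ℕ := ⌈B.toReal⌉₊ + M + 1 with hN₀
  refine (hfreq.and_eventually (eventually_ge_atTop N₀)).mono ?_
  rintro n ⟨hlt, hnN⟩
  -- extract a pair realizing repA Y β n < C
  obtain ⟨r, ⟨w, W, hps, hlen, hr⟩, hrC⟩ := sInf_lt_iff.1 hlt
  set m : ℕ := w.length with hm
  set d : ℕ := W.length - w.length with hd
  have hwne : w ≠ [] := hps.2.2.2.2.2
  have hm1 : 1 ≤ m := List.length_pos_iff.mpr hwne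
  have hmlt : m < W.length := by
    rcases lt_or_eq_of_le hps.2.2.1.length_le with h | h
    · exact h
    · exact absurd (hps.2.2.1.eq_of_length h) hps.2.2.2.2.1.symm
  have hm0 : (m:ENNReal) ≠ 0 := by exact_mod_cast Nat.one_le_iff_ne_zero.mp hm1
  have hmtop : (m:ENNReal) ≠ ⊤ := ENNReal.natCast_ne_top m
  have hrβ : (d:ENNReal) / (m:ENNReal) ^ (1/β) < C := by rw [← hr]; exact hrC
  have hdlt : (d:ENNReal) < C * (m:ENNReal) ^ (1/β) :=
    (ENNReal.div_lt_iff (Or.inl (by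
        exact fun h => hm0 (by
          have := ENNReal.rpow_eq_zero_iff.mp h
          rcases this with ⟨h0, -⟩ | ⟨h0, -⟩
          · exact h0
          · exact absurd h0 hmtop)))
      (Or.inl (ENNReal.rpow_ne_top_of_nonneg (by positivity) hmtop))).1 hrβ
  -- m must be large
  have hmM : M ≤ m := by
    by_contra hc
    push_neg at hc
    have hmono : (m:ENNReal) ^ (1/β) ≤ (M:ENNReal) ^ (1/β) :=
      ENNReal.rpow_le_rpow (by exact_mod_cast hc.le) (by positivity)
    have hdB : (d:ENNReal) ≤ B :=
      le_trans hdlt.le (by rw [hBdef]; exact mul_le_mul_right hmono C)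
    have hdR : (d:ℝ) ≤ B.toReal := by
      have := ENNReal.toReal_mono hBne hdB
      simpa using this
    have hdceil : d ≤ ⌈B.toReal⌉₊ := by
      exact_mod_cast hdR.trans (Nat.le_ceil _)
    have hsum : d + m = W.length := Nat.sub_add_cancel hmlt.le
    have : n ≤ ⌈B.toReal⌉₊ + M := by
      rw [← hlen, ← hsum]
      omega
    omega
  -- conclude
  have hmem : (d:ENNReal) / (m:ENNReal) ^ (1/α) ∈
      {r | ∃ w' W', PSPair Y w' W' ∧ W'.length = n ∧
        r = ((W'.length - w'.length : ℕ) : ENNReal) / ((w'.length : ENNReal) ^ (1/α))} :=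
    ⟨w, W, hps, hlen, rfl⟩
  have hle : repA Y α n ≤ (d:ENNReal) / (m:ENNReal) ^ (1/α) := sInf_le hmem
  have key : (d:ENNReal) / (m:ENNReal) ^ (1/α)
      = ((d:ENNReal) / (m:ENNReal) ^ (1/β)) * (m:ENNReal) ^ (1/β - 1/α) := by
    have key' : ((m:ENNReal) ^ (1/α))⁻¹ = ((m:ENNReal) ^ (1/β))⁻¹ * (m:ENNReal) ^ (1/β - 1/α) := by
      rw [← ENNReal.rpow_neg, ← ENNReal.rpow_neg, ← ENNReal.rpow_add _ _ hm0 hmtop]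
      congr 1
      ring
    rw [ENNReal.div_eq_inv_mul, ENNReal.div_eq_inv_mul, key']
    ring
  calc repA Y α n ≤ (d:ENNReal) / (m:ENNReal) ^ (1/α) := hle
    _ = ((d:ENNReal) / (m:ENNReal) ^ (1/β)) * (m:ENNReal) ^ (1/β - 1/α) := key
    _ ≤ C * (m:ENNReal) ^ (1/β - 1/α) := mul_le_mul_left hrβ.le _
    _ ≤ (ε:ENNReal) := (hM m hmM).le

end CFPaper
end

section
/- Let θ ∈ [0,1] be irrational with A_α(θ) < ∞ for some α > 1, i.e., there is c > 1 with a_{m+1} ≤ c q_m^{α−1} for all m. Then the Sturmian subshift of slope θ is α-repetitive: 0 < R_α = limsup_{n→∞} R(n)/n^α < ∞; moreover R_α ≥ A_α(θ) and R(n) ≤ (2c+3) n^α for all n, provided A_α(θ) > 0 for the lower bound. -/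
open Filter Topology MeasureTheory

namespace CFPaper

section CFbasics

variable {θ : ℝ} {a : ℕ → ℕ}

/-- `q_n θ - p_n`. -/
noncomputable def Dq (θ : ℝ) (a : ℕ → ℕ) (n : ℕ) : ℝ := (cfQ a n : ℝ) * θ - (cfP a n : ℝ)

/-- `|q_n θ - p_n|` (with sign made explicit). -/
noncomputable def del (θ : ℝ) (a : ℕ → ℕ) (n : ℕ) : ℝ := (-1)^n * Dq θ a n

lemma cfQ_pos_s9 (hcf : IsCF θ a) : ∀ n, 0 < cfQ a n := by
  have ha := hcf.2.1
  intro n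
  induction n using Nat.twoStepInduction with
  | zero => simp [cfQ]
  | one => simp only [cfQ]; exact ha 1 le_rfl
  | more n ih1 ih2 => simp only [cfQ]; positivity

lemma cfQ_mono (hcf : IsCF θ a) : ∀ n, cfQ a n ≤ cfQ a (n+1) := by
  have ha := hcf.2.1
  intro n
  match n with
  | 0 => simpa [cfQ] using ha 1 le_rfl
  | (m+1) =>
    have h1 : 1 ≤ a (m+2) := ha (m+2) (by omega)
    have h2 : 0 < cfQ a (m+1) := cfQ_pos_s9 hcf (m+1)
    calc cfQ a (m+1) ≤ a (m+2) * cfQ a (m+1) + cfQ a m := by nlinarith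
    _ = cfQ a (m+2) := rfl

lemma cfQ_mono_le (hcf : IsCF θ a) {m n : ℕ} (h : m ≤ n) : cfQ a m ≤ cfQ a n := by
  induction n with
  | zero => simpa [Nat.le_zero.mp h]
  | succ k ih =>
    rcases Nat.lt_or_ge m (k+1) with h'|h'
    · exact (ih (by omega)).trans (cfQ_mono hcf k)
    · have : m = k+1 := by omega
      simp [this]

lemma cfQ_strict (hcf : IsCF θ a) : ∀ n, 1 ≤ n → cfQ a n < cfQ a (n+1) := by
  intro n hn
  match n, hn with
  | (m+1), _ =>
    have h1 : 1 ≤ a (m+2) := hcf.2.1 (m+2) (by omega)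
    have h2 : 0 < cfQ a (m+1) := cfQ_pos_s9 hcf (m+1)
    have h3 : 0 < cfQ a m := cfQ_pos_s9 hcf m
    calc cfQ a (m+1) < a (m+2) * cfQ a (m+1) + cfQ a m := by nlinarith
    _ = cfQ a (m+2) := rfl

lemma cfQ_ge (hcf : IsCF θ a) : ∀ n, n ≤ cfQ a (n+1) := by
  intro n
  induction n with
  | zero => simp
  | succ k ih =>
    have := cfQ_strict hcf (k+1) (by omega)
    have := cfQ_pos_s9 hcf (k+1)
    omega

lemma cf_det (n : ℕ) :
    (cfP a (n+1) : ℤ) * (cfQ a n : ℤ) - (cfP a n : ℤ) * (cfQ a (n+1) : ℤ) = (-1)^n := by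
  induction n with
  | zero => simp [cfP, cfQ]
  | succ m ih =>
    have e1 : (cfP a (m+2) : ℤ) = (a (m+2) : ℤ) * (cfP a (m+1) : ℤ) + (cfP a m : ℤ) := by
      push_cast [cfP]; ring
    have e2 : (cfQ a (m+2) : ℤ) = (a (m+2) : ℤ) * (cfQ a (m+1) : ℤ) + (cfQ a m : ℤ) := by
      push_cast [cfQ]; ring
    rw [e1, e2, pow_succ]
    linear_combination (-1 : ℤ) * ih

lemma cf_det_real (n : ℕ) :
    (cfP a (n+1) : ℝ) * (cfQ a n : ℝ) - (cfP a n : ℝ) * (cfQ a (n+1) : ℝ) = (-1)^n := by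
  have := @cf_det a n
  exact_mod_cast congrArg (Int.cast : ℤ → ℝ) this

lemma Dq_rec (n : ℕ) :
    Dq θ a (n+2) = (a (n+2) : ℝ) * Dq θ a (n+1) + Dq θ a n := by
  unfold Dq
  push_cast [cfQ, cfP]
  ring

lemma neg_one_pow_sq (n : ℕ) : ((-1 : ℝ))^n * (-1)^n = 1 := by
  rw [← pow_add]
  exact Even.neg_one_pow ⟨n, rfl⟩

lemma Dq_eq_del (n : ℕ) : Dq θ a n = (-1)^n * del θ a n := by
  unfold del
  rw [← mul_assoc, neg_one_pow_sq, one_mul]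

lemma del_pos (hcf : IsCF θ a) (n : ℕ) : 0 < del θ a n := by
  have hq : ∀ m, (0:ℝ) < cfQ a m := fun m => by exact_mod_cast cfQ_pos_s9 hcf m
  set r : ℕ → ℝ := fun m => (cfP a m : ℝ) / (cfQ a m : ℝ) with hr
  have hdiff2 : ∀ m, r (m+2) - r m = (-1)^m * (a (m+2) : ℝ) / (cfQ a m * cfQ a (m+2)) := by
    intro m
    have hdet2 : (cfP a (m+2) : ℝ) * (cfQ a m : ℝ) - (cfP a m : ℝ) * (cfQ a (m+2) : ℝ)
        = (a (m+2) : ℝ) * (-1)^m := by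
      have e1 : (cfP a (m+2) : ℝ) = (a (m+2) : ℝ) * (cfP a (m+1) : ℝ) + (cfP a m : ℝ) := by
        push_cast [cfP]; ring
      have e2 : (cfQ a (m+2) : ℝ) = (a (m+2) : ℝ) * (cfQ a (m+1) : ℝ) + (cfQ a m : ℝ) := by
        push_cast [cfQ]; ring
      rw [e1, e2]
      linear_combination (a (m+2) : ℝ) * (cf_det_real (a := a) m)
    have h1 := (hq m).ne'
    have h2 := (hq (m+2)).ne'
    have : r (m+2) - r m = ((cfP a (m+2) : ℝ) * (cfQ a m) - (cfQ a (m+2)) * (cfP a m)) / ((cfQ a (m+2)) * (cfQ a m)) := by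
      rw [hr]; rw [div_sub_div _ _ h2 h1]
    rw [this]
    rw [show (cfP a (m+2) : ℝ) * (cfQ a m) - (cfQ a (m+2)) * (cfP a m) = (a (m+2) : ℝ) * (-1)^m by linear_combination hdet2]
    ring
  have htend : Tendsto r atTop (nhds θ) := hcf.2.2
  -- even convergents < θ
  have heven : ∀ k, r (2*k) < θ := by
    have hmono : Monotone (fun k => r (2*k)) := by
      apply monotone_nat_of_le_succ
      intro k
      have := hdiff2 (2*k)
      have ha2 : (1:ℝ) ≤ (a (2*k+2) : ℝ) := by exact_mod_cast hcf.2.1 (2*k+2) (by omega)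
      have hpow : ((-1:ℝ))^(2*k) = 1 := Even.neg_one_pow ⟨k, by ring⟩
      have hq1 := hq (2*k); have hq2 := hq (2*k+2)
      have h2k2 : 2*(k+1) = 2*k+2 := by ring
      rw [h2k2]
      rw [hpow, one_mul] at this
      have hpos : 0 < r (2*k+2) - r (2*k) := by rw [this]; positivity
      linarith
    have htend2 : Tendsto (fun k => r (2*k)) atTop (nhds θ) :=
      htend.comp (Filter.tendsto_atTop_atTop.mpr fun b => ⟨b, fun x hx => by omega⟩)
    intro k
    have hlt : r (2*k) < r (2*(k+1)) := by
      have := hdiff2 (2*k)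
      have ha2 : (1:ℝ) ≤ (a (2*k+2) : ℝ) := by exact_mod_cast hcf.2.1 (2*k+2) (by omega)
      have hpow : ((-1:ℝ))^(2*k) = 1 := Even.neg_one_pow ⟨k, by ring⟩
      have hq1 := hq (2*k); have hq2 := hq (2*k+2)
      have h2k2 : 2*(k+1) = 2*k+2 := by ring
      rw [h2k2]
      rw [hpow, one_mul] at this
      have hpos : 0 < r (2*k+2) - r (2*k) := by rw [this]; positivity
      linarith
    exact lt_of_lt_of_le hlt (hmono.ge_of_tendsto htend2 (k+1))
  have hodd : ∀ k, θ < r (2*k+1) := by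
    have hanti : Antitone (fun k => r (2*k+1)) := by
      apply antitone_nat_of_succ_le
      intro k
      have := hdiff2 (2*k+1)
      have ha2 : (1:ℝ) ≤ (a (2*k+3) : ℝ) := by exact_mod_cast hcf.2.1 (2*k+3) (by omega)
      have hpow : ((-1:ℝ))^(2*k+1) = -1 := Odd.neg_one_pow ⟨k, by ring⟩
      have hq1 := hq (2*k+1); have hq2 := hq (2*k+3)
      have h2k2 : 2*(k+1)+1 = 2*k+3 := by ring
      rw [h2k2]
      rw [hpow] at this
      rw [show 2*k+1+2 = 2*k+3 from by omega, neg_one_mul, neg_div] at this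
      have hpos2 : (0:ℝ) < (a (2*k+3) : ℝ) / ((cfQ a (2*k+1) : ℝ) * (cfQ a (2*k+3) : ℝ)) := by positivity
      linarith
    have htend2 : Tendsto (fun k => r (2*k+1)) atTop (nhds θ) :=
      htend.comp (Filter.tendsto_atTop_atTop.mpr fun b => ⟨b, fun x hx => by omega⟩)
    intro k
    have hlt : r (2*(k+1)+1) < r (2*k+1) := by
      have := hdiff2 (2*k+1)
      have ha2 : (1:ℝ) ≤ (a (2*k+3) : ℝ) := by exact_mod_cast hcf.2.1 (2*k+3) (by omega)
      have hpow : ((-1:ℝ))^(2*k+1) = -1 := Odd.neg_one_pow ⟨k, by ring⟩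
      have hq1 := hq (2*k+1); have hq2 := hq (2*k+3)
      have h2k2 : 2*(k+1)+1 = 2*k+3 := by ring
      rw [h2k2]
      rw [hpow] at this
      rw [show 2*k+1+2 = 2*k+3 from by omega, neg_one_mul, neg_div] at this
      have hpos2 : (0:ℝ) < (a (2*k+3) : ℝ) / ((cfQ a (2*k+1) : ℝ) * (cfQ a (2*k+3) : ℝ)) := by positivity
      linarith
    exact lt_of_le_of_lt (hanti.le_of_tendsto htend2 (k+1)) hlt
  rcases Nat.even_or_odd n with ⟨k, hk⟩ | ⟨k, hk⟩
  · have h : (cfP a n : ℝ) / (cfQ a n : ℝ) < θ := by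
      have h2 := heven k
      simp only [hr] at h2
      rwa [show 2*k = n from by omega] at h2
    have hq1 := hq n
    have hpow : ((-1:ℝ))^n = 1 := Even.neg_one_pow ⟨k, hk⟩
    unfold del Dq
    rw [hpow, one_mul]
    have := (div_lt_iff₀ hq1).mp h
    linarith
  · have h : θ < (cfP a n : ℝ) / (cfQ a n : ℝ) := by
      have h2 := hodd k
      simp only [hr] at h2
      rwa [show 2*k+1 = n from by omega] at h2
    have hq1 := hq n
    have hpow : ((-1:ℝ))^n = -1 := Odd.neg_one_pow ⟨k, hk⟩
    unfold del Dq
    rw [hpow]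
    have := (lt_div_iff₀ hq1).mp h
    linarith

end CFbasics
section CFmore

variable {θ : ℝ} {a : ℕ → ℕ}

lemma del_rec (hcf : IsCF θ a) (n : ℕ) :
    del θ a (n+2) = del θ a n - (a (n+2) : ℝ) * del θ a (n+1) := by
  unfold del
  rw [Dq_rec]
  simp only [pow_succ]
  ring

lemma del_anti (hcf : IsCF θ a) {m n : ℕ} (h : m ≤ n) : del θ a n ≤ del θ a m := by
  have key : ∀ k, del θ a (k+1) < del θ a k := by
    intro k
    have h1 := del_rec hcf k
    have h2 := del_pos hcf (k+2)
    have h3 := del_pos hcf (k+1)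
    have ha : (1:ℝ) ≤ (a (k+2) : ℝ) := by exact_mod_cast hcf.2.1 (k+2) (by omega)
    nlinarith
  exact antitone_nat_of_succ_le (fun k => (key k).le) h

lemma del_identity (hcf : IsCF θ a) (n : ℕ) :
    (cfQ a (n+1) : ℝ) * del θ a n + (cfQ a n : ℝ) * del θ a (n+1) = 1 := by
  have hdet := cf_det_real (a := a) n
  have hs := neg_one_pow_sq n
  unfold del Dq
  simp only [pow_succ]
  linear_combination ((-1:ℝ)^n) * hdet + hs

lemma del_zero_eq (hcf : IsCF θ a) : del θ a 0 = θ := by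
  simp [del, Dq, cfQ, cfP]

lemma theta_pos (hcf : IsCF θ a) : 0 < θ := by
  have := del_pos hcf 0
  rwa [del_zero_eq hcf] at this

lemma del_le_theta (hcf : IsCF θ a) (n : ℕ) : del θ a n ≤ θ := by
  calc del θ a n ≤ del θ a 0 := del_anti hcf (Nat.zero_le n)
  _ = θ := del_zero_eq hcf

lemma theta_add_del_le_one (hcf : IsCF θ a) {n : ℕ} (hn : 1 ≤ n) : θ + del θ a n ≤ 1 := by
  have h1 := del_identity hcf 0
  -- q_1 * θ + q_0 * del 1 = 1, q_1 = a 1 ≥ 1, q_0 = 1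
  rw [del_zero_eq hcf] at h1
  have hq0 : (cfQ a 0 : ℝ) = 1 := by simp [cfQ]
  have hq1 : (1:ℝ) ≤ (cfQ a 1 : ℝ) := by
    have := cfQ_pos_s9 hcf 1; exact_mod_cast this
  rw [hq0, one_mul] at h1
  have h2 : del θ a n ≤ del θ a 1 := del_anti hcf hn
  have h3 := theta_pos hcf
  nlinarith

lemma theta_lt_one (hcf : IsCF θ a) : θ < 1 := by
  have := theta_add_del_le_one hcf (le_refl 1)
  have := del_pos hcf 1
  linarith

/-- Best approximation property. -/
lemma best_approx (hcf : IsCF θ a) (n : ℕ) (d p : ℤ) (hd : d ≠ 0)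
    (hlt : |d| < (cfQ a (n+1) : ℤ)) : del θ a n ≤ |d * θ - p| := by
  have hdet := @cf_det a n
  have hs : ((-1:ℤ)^n) * ((-1)^n) = 1 := by
    rw [← pow_add]; exact Even.neg_one_pow ⟨n, rfl⟩
  set s : ℤ := (-1)^n with hsdef
  set x : ℤ := s * (d * (cfP a (n+1) : ℤ) - p * (cfQ a (n+1) : ℤ)) with hxdef
  set y : ℤ := s * (p * (cfQ a n : ℤ) - d * (cfP a n : ℤ)) with hydef
  have hx : x * (cfQ a n : ℤ) + y * (cfQ a (n+1) : ℤ) = d := by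
    rw [hxdef, hydef, hsdef]
    linear_combination ((-1:ℤ)^n * d) * hdet + d * hs
  have hy : x * (cfP a n : ℤ) + y * (cfP a (n+1) : ℤ) = p := by
    rw [hxdef, hydef, hsdef]
    linear_combination ((-1:ℤ)^n * p) * hdet + p * hs
  have hreal : (d : ℝ) * θ - (p : ℝ) = (x : ℝ) * Dq θ a n + (y : ℝ) * Dq θ a (n+1) := by
    have hxr : ((x : ℝ)) * (cfQ a n : ℝ) + (y : ℝ) * (cfQ a (n+1) : ℝ) = (d : ℝ) := by
      exact_mod_cast congrArg (Int.cast : ℤ → ℝ) hx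
    have hyr : ((x : ℝ)) * (cfP a n : ℝ) + (y : ℝ) * (cfP a (n+1) : ℝ) = (p : ℝ) := by
      exact_mod_cast congrArg (Int.cast : ℤ → ℝ) hy
    unfold Dq
    linear_combination hyr - θ * hxr
  have hDn : Dq θ a n = (-1:ℝ)^n * del θ a n := Dq_eq_del n
  have hDn1 : Dq θ a (n+1) = (-1:ℝ)^(n+1) * del θ a (n+1) := Dq_eq_del (n+1)
  have habs : |(d:ℝ) * θ - p| = |(x:ℝ) * del θ a n - (y:ℝ) * del θ a (n+1)| := by
    rw [hreal, hDn, hDn1]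
    rw [show (x:ℝ) * ((-1)^n * del θ a n) + (y:ℝ) * ((-1)^(n+1) * del θ a (n+1))
        = (-1)^n * ((x:ℝ) * del θ a n - (y:ℝ) * del θ a (n+1)) from by rw [pow_succ]; ring]
    rw [abs_mul, abs_pow, abs_neg, abs_one, one_pow, one_mul]
  rw [habs]
  have hdn := del_pos hcf n
  have hdn1 := del_pos hcf (n+1)
  have hqn : (1:ℤ) ≤ (cfQ a n : ℤ) := by exact_mod_cast cfQ_pos_s9 hcf n
  have hqn1 : (1:ℤ) ≤ (cfQ a (n+1) : ℤ) := by exact_mod_cast cfQ_pos_s9 hcf (n+1)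
  rcases lt_trichotomy y 0 with hy0 | hy0 | hy0
  · rcases lt_trichotomy x 0 with hx0 | hx0 | hx0
    · -- both negative : |d| ≥ q_{n+1}
      exfalso
      have : d ≤ -(cfQ a (n+1) : ℤ) := by nlinarith [hx]
      have habs := abs_lt.mp hlt
      omega
    · -- x = 0 : d = y * q_{n+1}, |d| ≥ q_{n+1}
      exfalso
      rw [hx0] at hx
      simp at hx
      have : d ≤ -(cfQ a (n+1) : ℤ) := by nlinarith [hx]
      have habs := abs_lt.mp hlt
      omega
    · -- x > 0, y < 0 : same-sign sum
      have hx1 : (1:ℝ) ≤ (x:ℝ) := by exact_mod_cast hx0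
      have hy1 : (1:ℝ) ≤ -(y:ℝ) := by
        have : (1:ℤ) ≤ -y := by omega
        exact_mod_cast this
      have hpos : 0 < (x:ℝ) * del θ a n - (y:ℝ) * del θ a (n+1) := by nlinarith
      rw [abs_of_pos hpos]
      nlinarith
  · -- y = 0 : x ≠ 0
    have hx0 : x ≠ 0 := by
      intro h
      rw [h, hy0] at hx
      simp at hx
      exact hd hx.symm
    rw [hy0]
    simp only [Int.cast_zero, zero_mul, sub_zero]
    rw [abs_mul]
    have h1 : (1:ℝ) ≤ |(x:ℝ)| := by
      have : (1:ℤ) ≤ |x| := Int.one_le_abs hx0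
      calc (1:ℝ) ≤ ((|x| : ℤ) : ℝ) := by exact_mod_cast this
      _ = |(x:ℝ)| := by push_cast; rfl
    rw [abs_of_pos hdn]
    nlinarith
  · rcases lt_trichotomy x 0 with hx0 | hx0 | hx0
    · -- x < 0, y > 0
      have hx1 : (1:ℝ) ≤ -(x:ℝ) := by
        have : (1:ℤ) ≤ -x := by omega
        exact_mod_cast this
      have hy1 : (1:ℝ) ≤ (y:ℝ) := by exact_mod_cast hy0
      have hneg : (x:ℝ) * del θ a n - (y:ℝ) * del θ a (n+1) < 0 := by nlinarith
      rw [abs_of_neg hneg]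
      nlinarith
    · -- x = 0
      exfalso
      rw [hx0] at hx
      simp at hx
      have : (cfQ a (n+1) : ℤ) ≤ d := by nlinarith [hx]
      have habs := abs_lt.mp hlt
      omega
    · -- both positive
      exfalso
      have : (cfQ a (n+1) : ℤ) ≤ d := by nlinarith [hx]
      have habs := abs_lt.mp hlt
      omega

end CFmore
section Covering

variable {θ : ℝ} {a : ℕ → ℕ}

lemma fract_shift (x t : ℝ) : Int.fract (Int.fract x - t) = Int.fract (x - t) := by
  have h : Int.fract x - t = x - t - (⌊x⌋ : ℝ) := by unfold Int.fract; ring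
  rw [h, Int.fract_sub_intCast]

lemma del_succ_lt (hcf : IsCF θ a) (k : ℕ) : del θ a (k+1) < del θ a k := by
  have h1 := del_rec hcf k
  have h2 := del_pos hcf (k+2)
  have h3 := del_pos hcf (k+1)
  have ha : (1:ℝ) ≤ (a (k+2) : ℝ) := by exact_mod_cast hcf.2.1 (k+2) (by omega)
  nlinarith

lemma fract_step (v : ℝ) (j n m : ℕ) :
    Int.fract (v - ((m + j * cfQ a (n+1) : ℕ) : ℝ) * θ)
      = Int.fract (Int.fract (v - (m:ℝ) * θ) - (j:ℝ) * Dq θ a (n+1)) := by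
  rw [fract_shift]
  have h1 : v - ((m + j * cfQ a (n+1) : ℕ) : ℝ) * θ
      = (v - (m:ℝ)*θ - (j:ℝ) * Dq θ a (n+1)) - (((j * cfP a (n+1) : ℕ) : ℤ) : ℝ) := by
    unfold Dq; push_cast; ring
  rw [h1, Int.fract_sub_intCast]

set_option maxHeartbeats 1000000 in
lemma covering (hcf : IsCF θ a) : ∀ (n : ℕ) (w : ℝ),
    ∃ m : ℕ, m < cfQ a (n+1) + cfQ a n ∧ Int.fract (w - (m:ℝ) * θ) < del θ a n := by
  intro n
  induction n with
  | zero =>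
    intro w
    have hθ := theta_pos hcf
    have hid := del_identity hcf 0
    norm_num at hid
    rw [del_zero_eq hcf] at hid
    have hq0 : (cfQ a 0 : ℝ) = 1 := by simp [cfQ]
    rw [hq0, one_mul] at hid
    have hd1 : del θ a 1 ≤ θ := del_le_theta hcf 1
    set u := Int.fract w with hu
    have hu0 : 0 ≤ u := Int.fract_nonneg w
    have hu1 : u < 1 := Int.fract_lt_one w
    have hfl0 : (0:ℤ) ≤ ⌊u / θ⌋ := Int.floor_nonneg.mpr (by positivity)
    set j : ℕ := (⌊u / θ⌋).toNat with hj
    have hjz : ((j:ℤ):ℝ) = (⌊u / θ⌋ : ℝ) := by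
      rw [hj]; norm_cast; omega
    have hj1 : (j:ℝ) * θ ≤ u := by
      have := Int.floor_le (u / θ)
      calc (j:ℝ) * θ = (⌊u / θ⌋ : ℝ) * θ := by rw [← hjz]; norm_num
      _ ≤ (u / θ) * θ := by nlinarith
      _ = u := by field_simp
    have hj2 : u < ((j:ℝ)+1) * θ := by
      have := Int.lt_floor_add_one (u / θ)
      have h2 : u / θ < (j:ℝ) + 1 := by rw [show (j:ℝ) = ((j:ℤ):ℝ) from by norm_cast, hjz]; exact_mod_cast this
      calc u = (u / θ) * θ := by field_simp
      _ < ((j:ℝ)+1) * θ := by nlinarith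
    refine ⟨j, ?_, ?_⟩
    · -- j < cfQ 1 + cfQ 0
      have hq1 : (cfQ a 1 : ℝ) * θ + θ > 1 := by
        have h5 := del_pos hcf 1
        have h6 : del θ a 1 < θ := by
          have h7 := del_succ_lt hcf 0
          rwa [del_zero_eq hcf] at h7
        linarith
      have : (j:ℝ) * θ < ((cfQ a 1 : ℝ) + 1) * θ := by nlinarith
      have hjlt : (j:ℝ) < (cfQ a 1 : ℝ) + 1 := by
        exact lt_of_mul_lt_mul_right (by linarith [this]) hθ.le
      have : j < cfQ a 1 + 1 := by exact_mod_cast hjlt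
      simpa [cfQ] using this
    · have hjθ : 0 ≤ (j:ℝ)*θ := by positivity
      have heq : Int.fract (w - (j:ℝ)*θ) = u - (j:ℝ)*θ := by
        rw [← fract_shift w ((j:ℝ)*θ), ← hu]
        exact Int.fract_eq_self.mpr ⟨by linarith, by linarith⟩
      rw [heq, del_zero_eq hcf]
      linarith
  | succ n ih =>
    intro w
    have hδpos := del_pos hcf n
    have hηpos := del_pos hcf (n+1)
    have hδ''pos := del_pos hcf (n+2)
    have hδ''η := del_succ_lt hcf (n+1)
    have hrec := del_rec hcf n
    have ha2 : 1 ≤ a (n+2) := hcf.2.1 (n+2) (by omega)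
    have hQ2 : cfQ a (n+2) = a (n+2) * cfQ a (n+1) + cfQ a n := rfl
    set δ := del θ a n
    set η := del θ a (n+1)
    set δ'' := del θ a (n+2)
    have ha2η : (a (n+2) : ℝ) * η = δ - δ'' := by rw [hrec]; ring
    have hδθ : δ ≤ θ := del_le_theta hcf n
    have hηθ : η ≤ θ := del_le_theta hcf (n+1)
    have hθ1 := theta_lt_one hcf
    rcases Nat.even_or_odd n with he | ho
    · -- n even : Dq (n+1) = -η
      have hD : Dq θ a (n+1) = -η := by
        rw [Dq_eq_del (n+1), Odd.neg_one_pow (Even.add_one he)]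
        ring
      set c : ℝ := 1 - (a (n+2) : ℝ) * η with hc
      have hc0 : 0 < c := by rw [hc, ha2η]; linarith
      have hc1 : c < 1 := by
        rw [hc]
        have : 0 < (a (n+2) : ℝ) * η := by positivity
        linarith
      obtain ⟨m', hm', hy⟩ := ih (w - c)
      set y := Int.fract (w - (m':ℝ) * θ) with hydef
      have hy0 : 0 ≤ y := Int.fract_nonneg _
      have hy1 : y < 1 := Int.fract_lt_one _
      have hy' : Int.fract (y - c) < δ := by
        rw [hydef, fract_shift, show w - (m':ℝ)*θ - c = w - c - (m':ℝ)*θ from by ring]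
        exact hy
      rcases le_or_gt c y with hcy | hcy
      · -- y ∈ [c, 1)
        have hfr : Int.fract (y - c) = y - c := Int.fract_eq_self.mpr ⟨by linarith, by linarith⟩
        have hyc : y - c < δ := by rw [hfr] at hy'; exact hy'
        have h1y : 0 < 1 - y := by linarith
        have h1y2 : 1 - y ≤ (a (n+2) : ℝ) * η := by rw [hc] at hcy; linarith
        have hclpos : 0 < (1 - y) / η := by positivity
        have hflpos : (0:ℤ) < ⌈(1 - y) / η⌉ := Int.ceil_pos.mpr hclpos
        set j : ℕ := (⌈(1 - y) / η⌉).toNat with hjdef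
        have hjz : ((j:ℤ):ℝ) = (⌈(1 - y) / η⌉ : ℝ) := by rw [hjdef]; norm_cast; omega
        have hj1 : 1 ≤ j := by omega
        have hja : j ≤ a (n+2) := by
          have hle : ((1 - y) / η) ≤ (a (n+2) : ℝ) := by
            rw [div_le_iff₀ hηpos]; linarith
          have := Int.ceil_le.mpr (by exact_mod_cast hle : ((1-y)/η) ≤ ((a (n+2) : ℤ) : ℝ))
          omega
        have hjη1 : 1 - y ≤ (j:ℝ) * η := by
          have := Int.le_ceil ((1 - y) / η)
          have h2 : (1 - y) / η ≤ (j:ℝ) := by rw [show (j:ℝ) = ((j:ℤ):ℝ) from by norm_cast, hjz]; exact_mod_cast this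
          calc 1 - y = ((1-y)/η) * η := by field_simp
          _ ≤ (j:ℝ) * η := by nlinarith
        have hjη2 : ((j:ℝ) - 1) * η < 1 - y := by
          have := Int.ceil_lt_add_one ((1 - y) / η)
          have h2 : (j:ℝ) < (1 - y) / η + 1 := by
            rw [show (j:ℝ) = ((j:ℤ):ℝ) from by norm_cast, hjz]; exact_mod_cast this
          have h3 : ((j:ℝ) - 1) < (1-y)/η := by linarith
          calc ((j:ℝ)-1) * η < ((1-y)/η) * η := by nlinarith
          _ = 1 - y := by field_simp
        refine ⟨m' + j * cfQ a (n+1), ?_, ?_⟩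
        · have h7 : j * cfQ a (n+1) ≤ a (n+2) * cfQ a (n+1) := Nat.mul_le_mul_right _ hja
          have hQ2' : cfQ a (n+1+1) = a (n+2) * cfQ a (n+1) + cfQ a n := rfl
          omega
        · rw [fract_step (a := a) w j n m', ← hydef, hD]
          have hval : y - (j:ℝ) * (-η) = (y + (j:ℝ)*η - 1) + ((1:ℤ):ℝ) := by push_cast; ring
          rw [hval, Int.fract_add_intCast]
          have hin1 : 0 ≤ y + (j:ℝ)*η - 1 := by linarith
          have hin2 : y + (j:ℝ)*η - 1 < η := by nlinarith
          rw [Int.fract_eq_self.mpr ⟨hin1, by linarith⟩]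
          exact hin2
      · -- y < c : then y < δ''
        have hyc : Int.fract (y - c) = y - c + 1 := by
          have : y - c + 1 = y - c + ((1:ℤ):ℝ) := by push_cast; ring
          rw [← Int.fract_add_intCast (y - c) 1, Int.fract_eq_self.mpr ⟨by push_cast; linarith, by push_cast; linarith⟩]
          push_cast
          ring
        have : y < δ'' := by
          rw [hyc] at hy'
          rw [hc] at hy'
          have := ha2η
          linarith
        refine ⟨m', ?_, by rw [← hydef]; linarith⟩
        have hQ2' : cfQ a (n+1+1) = a (n+2) * cfQ a (n+1) + cfQ a n := rfl
        omega
    · -- n odd : Dq (n+1) = η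
      have hD : Dq θ a (n+1) = η := by
        rw [Dq_eq_del (n+1), Even.neg_one_pow (Odd.add_one ho)]
        ring
      obtain ⟨m', hm', hy⟩ := ih w
      set y := Int.fract (w - (m':ℝ) * θ) with hydef
      have hy0 : 0 ≤ y := Int.fract_nonneg _
      have hfl0 : (0:ℤ) ≤ ⌊y / η⌋ := Int.floor_nonneg.mpr (by positivity)
      set j : ℕ := (⌊y / η⌋).toNat with hjdef
      have hjz : ((j:ℤ):ℝ) = (⌊y / η⌋ : ℝ) := by rw [hjdef]; norm_cast; omega
      have hj1 : (j:ℝ) * η ≤ y := by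
        have := Int.floor_le (y / η)
        have h2 : (j:ℝ) ≤ y / η := by rw [show (j:ℝ) = ((j:ℤ):ℝ) from by norm_cast, hjz]; exact_mod_cast this
        calc (j:ℝ) * η ≤ (y/η) * η := by nlinarith
        _ = y := by field_simp
      have hj2 : y < ((j:ℝ)+1) * η := by
        have := Int.lt_floor_add_one (y / η)
        have h2 : y / η < (j:ℝ) + 1 := by rw [show (j:ℝ) = ((j:ℤ):ℝ) from by norm_cast, hjz]; exact_mod_cast this
        calc y = (y/η) * η := by field_simp
        _ < ((j:ℝ)+1) * η := by nlinarith
      have hja : j ≤ a (n+2) := by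
        by_contra hja
        push_neg at hja
        have : ((a (n+2) : ℝ)+1) * η ≤ (j:ℝ) * η := by
          have : ((a (n+2):ℝ)) + 1 ≤ (j:ℝ) := by exact_mod_cast hja
          nlinarith
        have : y ≥ ((a (n+2) : ℝ)+1) * η := by linarith
        have hcontr : δ < y := by nlinarith [ha2η, hδ''η]
        linarith
      refine ⟨m' + j * cfQ a (n+1), ?_, ?_⟩
      · have h7 : j * cfQ a (n+1) ≤ a (n+2) * cfQ a (n+1) := Nat.mul_le_mul_right _ hja
        have hQ2' : cfQ a (n+1+1) = a (n+2) * cfQ a (n+1) + cfQ a n := rfl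
        omega
      · rw [fract_step (a := a) w j n m', ← hydef, hD]
        have hin1 : 0 ≤ y - (j:ℝ)*η := by linarith
        have hin2 : y - (j:ℝ)*η < η := by nlinarith
        rw [Int.fract_eq_self.mpr ⟨hin1, by nlinarith [hηpos, theta_lt_one hcf, del_le_theta hcf (n+1)]⟩]
        exact hin2

end Covering
section Coding

variable {θ : ℝ} {a : ℕ → ℕ}

/-- Orbit point of the rotation coding. -/
noncomputable def ptF (θ : ℝ) (m : ℕ) : ℝ := Int.fract (-(θ * m))

lemma ptF_nonneg (θ : ℝ) (m : ℕ) : 0 ≤ ptF θ m := Int.fract_nonneg _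
lemma ptF_lt_one (θ : ℝ) (m : ℕ) : ptF θ m < 1 := Int.fract_lt_one _

lemma rotWord_true_iff (hθ0 : 0 < θ) (hθ1 : θ < 1) (m : ℕ) :
    rotWord θ m = true ↔ ptF θ m < θ := by
  unfold rotWord ptF
  have hy : θ * ((m:ℝ)+1) = θ * (m:ℝ) + θ := by ring
  rw [hy]
  set y := θ * (m:ℝ) with hydef
  have h1 : ⌈y⌉ ≤ ⌈y + θ⌉ := Int.ceil_le_ceil (by linarith)
  have h2 : ⌈y + θ⌉ ≤ ⌈y⌉ + 1 := by
    have h3 := Int.ceil_le_ceil (show y + θ ≤ y + 1 by linarith)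
    rwa [Int.ceil_add_one] at h3
  have hfr : Int.fract (-y) = (⌈y⌉ : ℝ) - y := by
    unfold Int.fract
    rw [Int.floor_neg]
    push_cast
    ring
  constructor
  · intro h
    have hcond : ⌈y+θ⌉ - ⌈y⌉ = 1 := by by_contra hc; simp [hc] at h
    have h4 : (⌈y⌉ : ℝ) < y + θ := Int.lt_ceil.mp (by omega)
    rw [hfr]
    linarith
  · intro h
    rw [hfr] at h
    have h4 : ⌈y⌉ < ⌈y+θ⌉ := Int.lt_ceil.mpr (by linarith)
    have hcond : ⌈y+θ⌉ - ⌈y⌉ = 1 := by omega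
    simp [hcond]

lemma bool_ne_iff (x y : Bool) : x ≠ y ↔ ¬(x = true ↔ y = true) := by
  cases x <;> cases y <;> simp

lemma ptF_shift (θ : ℝ) (m d : ℕ) : ptF θ (m + d) = Int.fract (ptF θ m - θ * d) := by
  unfold ptF
  rw [fract_shift]
  congr 1
  push_cast
  ring

lemma ptF_q (m k : ℕ) : ptF θ (m + cfQ a k) = Int.fract (ptF θ m - Dq θ a k) := by
  rw [ptF_shift]
  rw [show ptF θ m - θ * (cfQ a k : ℝ) = (ptF θ m - Dq θ a k) - ((cfP a k : ℤ) : ℝ) from by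
    unfold Dq; push_cast; ring, Int.fract_sub_intCast]

lemma fract_eq_add_one {z : ℝ} (h1 : (0:ℝ) ≤ z + 1) (h2 : z < 0) : Int.fract z = z + 1 := by
  have h3 : Int.fract (z + ((1:ℤ):ℝ)) = Int.fract z := Int.fract_add_intCast z 1
  have h4 : Int.fract (z + 1) = z + 1 := by
    apply Int.fract_eq_self.mpr
    constructor
    · linarith
    · linarith
  calc Int.fract z = Int.fract (z + 1) := by rw [← h3]; norm_num
  _ = z + 1 := h4

/-- `m` is a bad position for scale `k`. -/
def badPos (θ : ℝ) (a : ℕ → ℕ) (k m : ℕ) : Prop :=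
  rotWord θ m ≠ rotWord θ (m + cfQ a k)

lemma Dq_of_even {k : ℕ} (hk : Even k) : Dq θ a k = del θ a k := by
  rw [Dq_eq_del k, Even.neg_one_pow hk, one_mul]

lemma Dq_of_odd {k : ℕ} (hk : Odd k) : Dq θ a k = -del θ a k := by
  rw [Dq_eq_del k, Odd.neg_one_pow hk]; ring

/-- In the even case, if the orbit point is in `[0, δ)`, the position is bad;
    odd case : `[1-δ, 1)`. -/
lemma bad_of_band (hcf : IsCF θ a) {k : ℕ} (hk : 1 ≤ k) (m : ℕ)
    (h : (Even k ∧ ptF θ m < del θ a k) ∨ (Odd k ∧ 1 - del θ a k ≤ ptF θ m)) :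
    badPos θ a k m := by
  have hθ0 := theta_pos hcf
  have hθ1 := theta_lt_one hcf
  have hδpos := del_pos hcf k
  have hδθ := del_le_theta hcf k
  have hθδ := theta_add_del_le_one hcf hk
  set δ := del θ a k
  set x := ptF θ m with hx
  have hx0 : 0 ≤ x := ptF_nonneg θ m
  have hx1 : x < 1 := ptF_lt_one θ m
  unfold badPos
  rw [bool_ne_iff, rotWord_true_iff hθ0 hθ1, rotWord_true_iff hθ0 hθ1]
  rcases h with ⟨he, hband⟩ | ⟨ho, hband⟩
  · -- x ∈ [0, δ) : x' = x - δ + 1 ∈ [1-δ, 1), rot m true, rot m+q false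
    have hx' : ptF θ (m + cfQ a k) = x - δ + 1 := by
      rw [ptF_q, Dq_of_even he, ← hx]
      exact fract_eq_add_one (by linarith) (by linarith)
    rw [hx']
    intro hiff
    have h5 : x < θ := by linarith
    have h6 := hiff.mp h5
    linarith
  · -- x ∈ [1-δ, 1) : x' = x + δ - 1 ∈ [0, δ), rot m false, rot m+q true
    have hx' : ptF θ (m + cfQ a k) = x + δ - 1 := by
      rw [ptF_q, Dq_of_odd ho, ← hx]
      have h9 : Int.fract (x - -δ) = Int.fract ((x + δ - 1) + ((1:ℤ):ℝ)) := by norm_num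
      rw [h9, Int.fract_add_intCast]
      exact Int.fract_eq_self.mpr ⟨by linarith, by linarith⟩
    rw [hx']
    intro hiff
    have h5 : x + δ - 1 < θ := by linarith
    have h6 := hiff.mpr h5
    linarith

/-- Bad positions lie in the union of two bands. -/
lemma band_of_bad (hcf : IsCF θ a) {k : ℕ} (hk : 1 ≤ k) (m : ℕ) (hb : badPos θ a k m) :
    (Even k ∧ (ptF θ m < del θ a k ∨ (θ ≤ ptF θ m ∧ ptF θ m < θ + del θ a k))) ∨
    (Odd k ∧ (1 - del θ a k ≤ ptF θ m ∨ (θ - del θ a k ≤ ptF θ m ∧ ptF θ m < θ))) := by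
  have hθ0 := theta_pos hcf
  have hθ1 := theta_lt_one hcf
  have hδpos := del_pos hcf k
  have hδθ := del_le_theta hcf k
  have hθδ := theta_add_del_le_one hcf hk
  set δ := del θ a k
  set x := ptF θ m with hx
  have hx0 : 0 ≤ x := ptF_nonneg θ m
  have hx1 : x < 1 := ptF_lt_one θ m
  unfold badPos at hb
  rw [bool_ne_iff, rotWord_true_iff hθ0 hθ1, rotWord_true_iff hθ0 hθ1] at hb
  rcases Nat.even_or_odd k with he | ho
  · left
    refine ⟨he, ?_⟩
    by_contra hcon
    push_neg at hcon
    obtain ⟨h1, h2⟩ := hcon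
    -- x ∈ [δ, θ) ∪ [θ+δ, 1) : no flip
    have hx' : ptF θ (m + cfQ a k) = x - δ := by
      rw [ptF_q, Dq_of_even he, ← hx]
      exact Int.fract_eq_self.mpr ⟨by linarith, by linarith⟩
    rw [hx'] at hb
    rcases lt_or_ge x θ with h3 | h3
    · exact hb (by constructor <;> intro <;> linarith)
    · have h4 := h2 h3
      exact hb (by constructor <;> intro <;> linarith)
  · right
    refine ⟨ho, ?_⟩
    by_contra hcon
    push_neg at hcon
    obtain ⟨h1, h2⟩ := hcon
    -- x ∈ [0, θ-δ) ∪ [θ, 1-δ) : no flip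
    have hx' : ptF θ (m + cfQ a k) = x + δ := by
      rw [ptF_q, Dq_of_odd ho, ← hx]
      rw [show x - -δ = x + δ from by ring]
      exact Int.fract_eq_self.mpr ⟨by linarith, by linarith⟩
    rw [hx'] at hb
    rcases lt_or_ge x θ with h3 | h3
    · have h4 : x < θ - δ := by
        by_contra h5
        push_neg at h5
        have h6 := h2 h5
        linarith
      exact hb (by constructor <;> intro <;> linarith)
    · exact hb (by constructor <;> intro <;> linarith)

/-- Bad positions exist in every window of length `q_{k+1} + q_k`. -/
lemma bad_exists (hcf : IsCF θ a) {k : ℕ} (hk : 1 ≤ k) (t : ℕ) :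
    ∃ m, t ≤ m ∧ m < t + (cfQ a (k+1) + cfQ a k) ∧ badPos θ a k m := by
  have hδpos := del_pos hcf k
  rcases Nat.even_or_odd k with he | ho
  · obtain ⟨j, hj, hfr⟩ := covering hcf k (-(θ * t))
    refine ⟨t + j, by omega, by omega, ?_⟩
    apply bad_of_band hcf hk
    left
    refine ⟨he, ?_⟩
    have : ptF θ (t + j) = Int.fract (-(θ * t) - (j:ℝ) * θ) := by
      unfold ptF
      congr 1
      push_cast
      ring
    rw [this]
    exact hfr
  · obtain ⟨j, hj, hfr⟩ := covering hcf k (-(θ * t) - (1 - del θ a k))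
    refine ⟨t + j, by omega, by omega, ?_⟩
    apply bad_of_band hcf hk
    right
    refine ⟨ho, ?_⟩
    set δ := del θ a k
    set x := ptF θ (t + j) with hxd
    have hx0 : 0 ≤ x := ptF_nonneg _ _
    have hx1 : x < 1 := ptF_lt_one _ _
    have hkey : Int.fract (x - (1 - δ)) < δ := by
      rw [hxd]
      unfold ptF
      rw [fract_shift]
      rw [show -(θ * (t + j : ℕ)) - (1 - δ) = (-(θ * t) - (1 - δ)) - (j:ℝ) * θ from by push_cast; ring]
      exact hfr
    by_contra hcon
    push_neg at hcon
    -- x < 1 - δ : fract (x - (1-δ)) = x - (1-δ) + 1 = x + δ ≥ δ, contradiction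
    have hδ1 : δ ≤ θ := del_le_theta hcf k
    have hθ2 := theta_lt_one hcf
    have : Int.fract (x - (1 - δ)) = x + δ := by
      have h9 : x - (1 - δ) < 0 := by linarith
      have := fract_eq_add_one (z := x - (1 - δ)) (by linarith) h9
      rw [this]; ring
    rw [this] at hkey
    linarith

/-- The gap structure of bad positions. -/
lemma bad_gap (hcf : IsCF θ a) {k : ℕ} (hk : 1 ≤ k) {m m' : ℕ} (hmm : m < m')
    (hb : badPos θ a k m) (hb' : badPos θ a k m') :
    m' = m + 1 ∨ m + cfQ a (k+1) ≤ m' + 1 := by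
  have hδpos := del_pos hcf k
  set δ := del θ a k with hδ
  set x := ptF θ m with hx
  set x' := ptF θ m' with hx'
  set d : ℤ := (m' : ℤ) - (m : ℤ) with hd
  have hd1 : 1 ≤ d := by omega
  have hkey : ∃ P : ℤ, x - x' = (d:ℝ) * θ - P := by
    refine ⟨⌊-(θ * m)⌋ - ⌊-(θ * m')⌋, ?_⟩
    rw [hx, hx', hd]
    unfold ptF Int.fract
    push_cast
    ring
  obtain ⟨P, hP⟩ := hkey
  rw [hd] at hP
  push_cast at hP
  have hx0 : 0 ≤ x := ptF_nonneg θ m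
  have hx1 : x < 1 := ptF_lt_one θ m
  have hx0' : 0 ≤ x' := ptF_nonneg θ m'
  have hx1' : x' < 1 := ptF_lt_one θ m'
  have hbands : ∃ e : ℤ, (e = -1 ∨ e = 0 ∨ e = 1) ∧ ∃ P' : ℤ, |((d + e : ℤ):ℝ) * θ - P'| < δ := by
    have h1 := band_of_bad hcf hk m hb
    have h2 := band_of_bad hcf hk m' hb'
    rcases h1 with ⟨he, hB⟩ | ⟨ho, hB⟩
    · rcases h2 with ⟨_, hB'⟩ | ⟨ho', _⟩
      · rw [← hx] at hB
        rw [← hx'] at hB'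
        rcases hB with h | ⟨h, hh⟩ <;> rcases hB' with h' | ⟨h', hh'⟩
        · refine ⟨0, by norm_num, P, ?_⟩
          rw [abs_lt, hd]
          push_cast
          constructor <;> linarith
        · refine ⟨1, by norm_num, P, ?_⟩
          rw [abs_lt, hd]
          push_cast
          constructor <;> linarith
        · refine ⟨-1, by norm_num, P, ?_⟩
          rw [abs_lt, hd]
          push_cast
          constructor <;> linarith
        · refine ⟨0, by norm_num, P, ?_⟩
          rw [abs_lt, hd]
          push_cast
          constructor <;> linarith
      · exact absurd (Nat.even_iff.mp he) (by have := Nat.odd_iff.mp ho'; omega)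
    · rcases h2 with ⟨he', _⟩ | ⟨_, hB'⟩
      · exact absurd (Nat.even_iff.mp he') (by have := Nat.odd_iff.mp ho; omega)
      · rw [← hx] at hB
        rw [← hx'] at hB'
        rcases hB with h | ⟨h, hh⟩ <;> rcases hB' with h' | ⟨h', hh'⟩
        · refine ⟨0, by norm_num, P, ?_⟩
          rw [abs_lt, hd]
          push_cast
          constructor <;> linarith
        · refine ⟨1, by norm_num, P + 1, ?_⟩
          rw [abs_lt, hd]
          push_cast
          constructor <;> linarith
        · refine ⟨-1, by norm_num, P - 1, ?_⟩
          rw [abs_lt, hd]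
          push_cast
          constructor <;> linarith
        · refine ⟨0, by norm_num, P, ?_⟩
          rw [abs_lt, hd]
          push_cast
          constructor <;> linarith
  obtain ⟨e, he1, P', hPP⟩ := hbands
  by_cases hde : d + e = 0
  · left
    rcases he1 with h|h|h <;> omega
  · have hge : (cfQ a (k+1) : ℤ) ≤ |d + e| := by
      by_contra hlt
      push_neg at hlt
      have := best_approx hcf k (d + e) hde hlt (p := P')
      linarith
    have habs : |d + e| = d + e := abs_of_nonneg (by rcases he1 with h|h|h <;> omega)
    rw [habs] at hge
    right
    rcases he1 with h|h|h <;> omega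

end Coding
section LangSection

variable {θ : ℝ} {a : ℕ → ℕ}

/-- Window of the rotation word. -/
noncomputable def windowW (θ : ℝ) (m n : ℕ) : List Bool :=
  (List.range n).map fun i => rotWord θ (m + i)

@[simp] lemma windowW_length (m n : ℕ) : (windowW θ m n).length = n := by
  simp [windowW]

lemma windowW_getElem (m n i : ℕ) (h : i < n) :
    (windowW θ m n)[i]'(by simpa using h) = rotWord θ (m + i) := by
  simp [windowW]

lemma windowW_append (m p q : ℕ) :
    windowW θ m (p + q) = windowW θ m p ++ windowW θ (m + p) q := by
  unfold windowW
  rw [List.range_add, List.map_append, List.map_map]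
  congr 1
  apply List.map_congr_left
  intro i _
  simp [Function.comp]
  congr 1
  omega

lemma windowW_infix_of (t j n K : ℕ) (h : j + n ≤ K) :
    windowW θ (t + j) n <:+: windowW θ t K := by
  refine ⟨windowW θ t j, windowW θ (t + j + n) (K - (j + n)), ?_⟩
  rw [List.append_assoc, ← windowW_append, ← windowW_append]
  congr 1
  omega

lemma infix_windowW {u : List Bool} {s M : ℕ} (h : u <:+: windowW θ s M) :
    ∃ i, i + u.length ≤ M ∧ u = windowW θ (s + i) u.length := by
  obtain ⟨s1, s2, heq⟩ := h
  have hlen : s1.length + u.length + s2.length = M := by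
    have h0 := congrArg List.length heq
    simp at h0
    omega
  refine ⟨s1.length, by omega, ?_⟩
  apply List.ext_getElem (by simp)
  intro i h1 h2
  have h3 : s1.length + i < M := by omega
  have h4 := congrArg (fun l => l[s1.length + i]?) heq
  have h5 : (s1 ++ u ++ s2)[s1.length + i]? = u[i]? := by
    rw [List.append_assoc]
    rw [List.getElem?_append_right (by omega)]
    rw [show s1.length + i - s1.length = i from by omega]
    rw [List.getElem?_append_left (by omega)]
  have h6 : (windowW θ s M)[s1.length + i]? = some (rotWord θ (s + (s1.length + i))) := by
    rw [List.getElem?_eq_getElem (by simpa using h3)]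
    rw [windowW_getElem _ _ _ h3]
  rw [h5, h6] at h4
  have h7 : u[i]'h1 = rotWord θ (s + (s1.length + i)) := by
    have := List.getElem?_eq_getElem h1
    rw [this] at h4
    exact Option.some.inj h4
  rw [h7, windowW_getElem _ _ _ (by simpa using h2)]
  congr 1
  omega

lemma shiftMap_iterate (x : ℕ → Bool) (k n : ℕ) : (shiftMap^[k] x) n = x (n + k) := by
  induction k generalizing x with
  | zero => rfl
  | succ j ih =>
    rw [Function.iterate_succ_apply]
    rw [ih (shiftMap x)]
    rfl

lemma rotWord_mem_sturmian : rotWord θ ∈ sturmian θ :=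
  subset_closure ⟨0, by simp⟩

lemma windowW_mem_Lang (m n : ℕ) : windowW θ m n ∈ Lang (sturmian θ) := by
  refine ⟨rotWord θ, rotWord_mem_sturmian, m, ?_⟩
  simp [windowW]

lemma mem_Lang_iff {w : List Bool} :
    w ∈ Lang (sturmian θ) ↔ ∃ m, w = windowW θ m w.length := by
  constructor
  · rintro ⟨x, hx, k, hw⟩
    set N := k + w.length with hN
    have hUopen : IsOpen {y : ℕ → Bool | ∀ i < N, y i = x i} := by
      have heq : {y : ℕ → Bool | ∀ i < N, y i = x i}
          = ⋂ i ∈ Finset.range N, {y : ℕ → Bool | y i = x i} := by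
        ext y; simp
      rw [heq]
      apply isOpen_biInter_finset
      intro i _
      have hpre : {y : ℕ → Bool | y i = x i} = (fun y : ℕ → Bool => y i) ⁻¹' {x i} := rfl
      rw [hpre]
      exact IsOpen.preimage (continuous_apply i) (isOpen_discrete _)
    obtain ⟨y, hy1, hy2⟩ := mem_closure_iff.mp hx _ hUopen (fun i _ => rfl)
    obtain ⟨j, rfl⟩ := hy2
    refine ⟨k + j, ?_⟩
    conv_lhs => rw [hw]
    apply List.ext_getElem (by simp)
    intro i h1 h2
    simp only [List.getElem_map, List.getElem_range, windowW_getElem]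
    rw [windowW_getElem _ _ _ (by simpa using h2)]
    have h3 : (shiftMap^[j] (rotWord θ)) (k + i) = x (k + i) := hy1 (k + i) (by simp at h1; omega)
    rw [shiftMap_iterate] at h3
    rw [← h3]
    congr 1
    omega
  · rintro ⟨m, hm⟩
    rw [hm]
    exact windowW_mem_Lang m w.length

end LangSection
section Occurrence

variable {θ : ℝ} {a : ℕ → ℕ}

lemma coding_cross (hθ0 : 0 < θ) (hθ1 : θ < 1) {x y : ℝ} (hx : 0 ≤ x) (hxy : x ≤ y)
    (hy : y < 1) (i : ℕ)
    (hne : ¬((Int.fract (x - θ*i) < θ) ↔ (Int.fract (y - θ*i) < θ))) :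
    ∃ j : ℕ, j ≤ i + 1 ∧ x < Int.fract (θ*j) ∧ Int.fract (θ*j) ≤ y := by
  set X := Int.fract (x - θ*i) with hX
  set Y := Int.fract (y - θ*i) with hY
  have hX0 : 0 ≤ X := Int.fract_nonneg _
  have hX1 : X < 1 := Int.fract_lt_one _
  have hY0 : 0 ≤ Y := Int.fract_nonneg _
  have hY1 : Y < 1 := Int.fract_lt_one _
  have hfloor : ⌊y - θ*i⌋ = ⌊x - θ*i⌋ ∨ ⌊y - θ*i⌋ = ⌊x - θ*i⌋ + 1 := by
    have h1 : ⌊x - θ*i⌋ ≤ ⌊y - θ*i⌋ := Int.floor_le_floor (by linarith)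
    have h2 : (⌊x - θ*i⌋ : ℝ) ≤ x - θ*i := Int.floor_le _
    have h3 : y - θ*i < x - θ*i + 1 := by linarith
    have h2b := Int.lt_floor_add_one (x - θ*i)
    have h4 : ⌊y - θ*i⌋ < ⌊x - θ*i⌋ + 2 := by
      apply Int.floor_lt.mpr
      push_cast
      linarith
    omega
  rcases hfloor with he | he
  · have hYX : Y = X + (y - x) := by
      rw [hX, hY]; unfold Int.fract; rw [he]; ring
    have h1 : X < θ := by
      rcases lt_or_ge X θ with h | h
      · exact h
      · exact absurd (iff_of_false (not_lt.mpr h) (not_lt.mpr (by linarith))) hne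
    have h2 : θ ≤ Y := by
      rcases lt_or_ge Y θ with h | h
      · exact absurd (iff_of_true h1 h) hne
      · exact h
    refine ⟨i+1, le_refl _, ?_, ?_⟩
    all_goals {
      have hz : Int.fract (θ*((i:ℕ)+1 : ℕ)) = x + (θ - X) := by
        have harg : θ*(((i:ℕ)+1 : ℕ) : ℝ) = (x + (θ - X)) - (⌊x - θ*i⌋ : ℝ) := by
          rw [hX]; unfold Int.fract; push_cast; ring
        rw [harg, Int.fract_sub_intCast]
        apply Int.fract_eq_self.mpr
        constructor
        · linarith
        · have : θ - X ≤ y - x := by linarith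
          linarith
      rw [hz]
      first
        | linarith
        | (have : θ - X ≤ y - x := by linarith
           linarith)
    }
  · have hYX : Y = X + (y - x) - 1 := by
      rw [hX, hY]; unfold Int.fract; rw [he]; push_cast; ring
    have h1 : θ ≤ X := by
      rcases lt_or_ge X θ with h | h
      · exact absurd (iff_of_true h (by linarith)) hne
      · exact h
    refine ⟨i, by omega, ?_, ?_⟩
    all_goals {
      have hz : Int.fract (θ*(i:ℕ)) = x + (1 - X) := by
        have harg : θ*((i:ℕ) : ℝ) = (x + (1 - X)) - ((⌊x - θ*i⌋ + 1 : ℤ) : ℝ) := by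
          rw [hX]; unfold Int.fract; push_cast; ring
        rw [harg, Int.fract_sub_intCast]
        apply Int.fract_eq_self.mpr
        constructor
        · linarith
        · have : 1 - X ≤ y - x := by linarith
          linarith
      rw [hz]
      first
        | linarith
        | (have : 1 - X ≤ y - x := by linarith
           linarith)
    }

set_option maxHeartbeats 1000000 in
lemma occurrence (hcf : IsCF θ a) {n k : ℕ} (hn : 1 ≤ n) (hq2 : n < cfQ a (k+1)) (u t : ℕ) :
    ∃ j, j ≤ cfQ a (k+1) + cfQ a k ∧ windowW θ (t + j) n = windowW θ u n := by
  classical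
  have hθ0 := theta_pos hcf
  have hθ1 := theta_lt_one hcf
  have hδpos := del_pos hcf k
  set β := ptF θ u with hβ
  have hβ0 : 0 ≤ β := ptF_nonneg θ u
  have hβ1 : β < 1 := ptF_lt_one θ u
  set F := (Finset.range (n+1)).image (fun j : ℕ => Int.fract (θ * j)) with hF
  have h0F : (0:ℝ) ∈ F := by
    rw [hF]
    apply Finset.mem_image.mpr
    exact ⟨0, by simp, by simp⟩
  have hFmem : ∀ p ∈ F, ∃ j2 : ℕ, j2 ≤ n ∧ Int.fract (θ*j2) = p := by
    intro p hp
    obtain ⟨j2, hj2, hval⟩ := Finset.mem_image.mp hp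
    refine ⟨j2, ?_, hval⟩
    simp at hj2
    omega
  have hFl : (F.filter (fun p => p ≤ β)).Nonempty := by
    refine ⟨0, Finset.mem_filter.mpr ⟨h0F, ?_⟩⟩
    exact hβ0
  set l := (F.filter (fun p => p ≤ β)).max' hFl with hl
  have hlβ : l ≤ β := (Finset.mem_filter.mp (Finset.max'_mem _ hFl)).2
  have hlF : l ∈ F := (Finset.mem_filter.mp (Finset.max'_mem _ hFl)).1
  have hlmax : ∀ p ∈ F, p ≤ β → p ≤ l := by
    intro p hp hpβ
    exact Finset.le_max' (F.filter (fun q => q ≤ β)) p (Finset.mem_filter.mpr ⟨hp, hpβ⟩)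
  have hl0 : 0 ≤ l := hlmax 0 h0F hβ0
  obtain ⟨r, hβr, hr1, hrmin, hrF1⟩ :
      ∃ r, β < r ∧ r ≤ 1 ∧ (∀ p ∈ F, β < p → r ≤ p) ∧ (r ∈ F ∨ (r = 1 ∧ ∀ p ∈ F, p ≤ β)) := by
    by_cases h : (F.filter (fun p => β < p)).Nonempty
    · have hmem := Finset.min'_mem _ h
      have hmem2 := Finset.mem_filter.mp hmem
      refine ⟨(F.filter (fun p => β < p)).min' h, hmem2.2, ?_, ?_, Or.inl hmem2.1⟩
      · obtain ⟨j2, _, hval⟩ := hFmem _ hmem2.1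
        rw [← hval]
        exact (Int.fract_lt_one _).le
      · intro p hp hpβ
        exact Finset.min'_le _ _ (Finset.mem_filter.mpr ⟨hp, hpβ⟩)
    · refine ⟨1, hβ1, le_refl 1, ?_, Or.inr ⟨rfl, ?_⟩⟩
      · intro p hp hpβ
        exact absurd ⟨p, Finset.mem_filter.mpr ⟨hp, hpβ⟩⟩ h
      · intro p hp
        by_contra hcon
        exact h ⟨p, Finset.mem_filter.mpr ⟨hp, not_le.mp hcon⟩⟩
  have hnogap : ∀ p ∈ F, l < p → r ≤ p := by
    intro p hp hlp
    rcases le_or_gt p β with h | h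
    · exact absurd (hlmax p hp h) (not_le.mpr hlp)
    · exact hrmin p hp h
  have hfract_form : ∀ j2 : ℕ, ∃ P : ℤ, Int.fract (θ*(j2:ℝ)) = (j2:ℝ)*θ - P :=
    fun j2 => ⟨⌊θ*(j2:ℝ)⌋, by unfold Int.fract; ring⟩
  have hgap : del θ a k ≤ r - l := by
    obtain ⟨j', hj'n, hj'⟩ := hFmem _ hlF
    rcases hrF1 with hrv | ⟨hrv, hall⟩
    · obtain ⟨j2, hj2n, hj2⟩ := hFmem _ hrv
      have hrl : l < r := lt_of_le_of_lt hlβ hβr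
      have hne : j2 ≠ j' := by
        intro hcon
        rw [hcon, hj'] at hj2
        linarith
      obtain ⟨P1, hP1⟩ := hfract_form j'
      obtain ⟨P2, hP2⟩ := hfract_form j2
      have hdiff : r - l = (((j2:ℤ) - (j':ℤ) : ℤ) : ℝ)*θ - ((P2 - P1 : ℤ) : ℝ) := by
        rw [← hj2, ← hj', hP1, hP2]
        push_cast
        ring
      have hba := best_approx hcf k ((j2:ℤ) - (j':ℤ)) (by omega)
        (by
          have h9 : |(j2:ℤ) - (j':ℤ)| ≤ (n:ℤ) := by rw [abs_le]; omega
          have h10 : (n:ℤ) < (cfQ a (k+1) : ℤ) := by exact_mod_cast hq2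
          omega) (p := P2 - P1)
      calc del θ a k ≤ |(((j2:ℤ) - (j':ℤ) : ℤ):ℝ) * θ - ((P2 - P1 : ℤ):ℝ)| := hba
      _ = |r - l| := by rw [← hdiff]
      _ = r - l := abs_of_pos (by linarith)
    · have hθF : θ ∈ F := by
        apply Finset.mem_image.mpr
        refine ⟨1, by simp; omega, ?_⟩
        simp only [Nat.cast_one, mul_one]
        exact Int.fract_eq_self.mpr ⟨hθ0.le, hθ1⟩
      have hθβ : θ ≤ β := hall θ hθF
      have hlθ : θ ≤ l := hlmax θ hθF hθβ
      have hj'0 : j' ≠ 0 := by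
        intro hcon
        rw [hcon] at hj'
        simp at hj'
        linarith
      obtain ⟨P1, hP1⟩ := hfract_form j'
      have hdiff : r - l = ((-(j':ℤ) : ℤ):ℝ)*θ - ((-(P1+1) : ℤ):ℝ) := by
        rw [hrv, ← hj', hP1]
        push_cast
        ring
      have hba := best_approx hcf k (-(j':ℤ)) (by omega)
        (by
          have h9 : |(-(j':ℤ))| ≤ (n:ℤ) := by rw [abs_le]; omega
          have h10 : (n:ℤ) < (cfQ a (k+1) : ℤ) := by exact_mod_cast hq2
          omega) (p := -(P1+1))
      calc del θ a k ≤ |((-(j':ℤ) : ℤ):ℝ) * θ - ((-(P1+1) : ℤ):ℝ)| := hba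
      _ = |r - l| := by rw [← hdiff]
      _ = r - l := abs_of_pos (by linarith)
  obtain ⟨j, hjlt, hjval⟩ := covering hcf k (-(θ * t) - l)
  set x := ptF θ (t + j) with hxd
  have hx0 : 0 ≤ x := ptF_nonneg _ _
  have hx1 : x < 1 := ptF_lt_one _ _
  have hkey : Int.fract (x - l) < del θ a k := by
    rw [hxd]
    unfold ptF
    rw [fract_shift]
    rw [show -(θ * ((t+j : ℕ):ℝ)) - l = (-(θ*(t:ℝ)) - l) - (j:ℝ)*θ from by push_cast; ring]
    exact hjval
  have hxl : l ≤ x := by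
    by_contra hc
    push_neg at hc
    have hfe : Int.fract (x - l) = x - l + 1 := fract_eq_add_one (by linarith) (by linarith)
    rw [hfe] at hkey
    have h9 : del θ a k ≤ 1 - l := by linarith
    linarith
  have hxval : x - l < del θ a k := by
    rw [Int.fract_eq_self.mpr ⟨by linarith, by linarith⟩] at hkey
    exact hkey
  have hxr : x < r := by linarith
  refine ⟨j, by omega, ?_⟩
  apply List.ext_getElem (by simp)
  intro i h1 h2
  have hin : i < n := by simpa using h1
  rw [windowW_getElem _ _ _ hin, windowW_getElem _ _ _ hin]
  have hpm := ptF_shift θ (t+j) i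
  rw [← hxd] at hpm
  have hpu := ptF_shift θ u i
  rw [← hβ] at hpu
  by_contra hne2x
  have hne2 : rotWord θ (t+j+i) ≠ rotWord θ (u+i) := hne2x
  rw [bool_ne_iff, rotWord_true_iff hθ0 hθ1, rotWord_true_iff hθ0 hθ1, hpm, hpu] at hne2
  rcases le_total x β with hxy | hxy
  · obtain ⟨j2, hj2i, hgt, hle⟩ := coding_cross hθ0 hθ1 hx0 hxy hβ1 i hne2
    have hzF : Int.fract (θ*(j2:ℝ)) ∈ F := Finset.mem_image.mpr ⟨j2, by simp; omega, rfl⟩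
    have h9 := hnogap _ hzF (by linarith)
    linarith
  · have hne3 : ¬((Int.fract (β - θ*i) < θ) ↔ (Int.fract (x - θ*i) < θ)) := fun h => hne2 h.symm
    obtain ⟨j2, hj2i, hgt, hle⟩ := coding_cross hθ0 hθ1 hβ0 hxy hx1 i hne3
    have hzF : Int.fract (θ*(j2:ℝ)) ∈ F := Finset.mem_image.mpr ⟨j2, by simp; omega, rfl⟩
    have h9 := hnogap _ hzF (by linarith)
    linarith

end Occurrence
section RepFunBounds

variable {θ : ℝ} {a : ℕ → ℕ}

lemma exists_k (hcf : IsCF θ a) (n : ℕ) (hn : 1 ≤ n) :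
    ∃ k, cfQ a k ≤ n ∧ n < cfQ a (k+1) := by
  have hex : ∃ K, n < cfQ a K := by
    refine ⟨n+2, ?_⟩
    have h1 := cfQ_ge hcf (n+1)
    have h2 : cfQ a (n+1+1) = cfQ a (n+2) := rfl
    omega
  have hK := Nat.find_spec hex
  have hK0 : Nat.find hex ≠ 0 := by
    intro h
    rw [h] at hK
    simp [cfQ] at hK
    omega
  obtain ⟨k, hk⟩ : ∃ k, Nat.find hex = k + 1 := ⟨Nat.find hex - 1, by omega⟩
  refine ⟨k, ?_, by rw [← hk]; exact hK⟩
  have h2 := Nat.find_min hex (m := k) (by omega)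
  omega

lemma mem_repSet (hcf : IsCF θ a) {n k : ℕ} (hn : 1 ≤ n) (hq2 : n < cfQ a (k+1)) :
    (cfQ a (k+1) + cfQ a k + n) ∈
      {r' | ∀ W ∈ Lang (sturmian θ), W.length = r' →
        ∀ w ∈ Lang (sturmian θ), w.length = n → w <:+: W} := by
  intro W hW hWlen w hw hwlen
  obtain ⟨tm, hWm⟩ := mem_Lang_iff.mp hW
  obtain ⟨um, hwm⟩ := mem_Lang_iff.mp hw
  rw [hWlen] at hWm
  rw [hwlen] at hwm
  obtain ⟨j, hj, heq⟩ := occurrence hcf hn hq2 um tm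
  rw [hwm, hWm, ← heq]
  exact windowW_infix_of tm j n _ (by omega)

lemma repFun_le (hcf : IsCF θ a) {n k : ℕ} (hn : 1 ≤ n) (hq2 : n < cfQ a (k+1)) :
    repFun (sturmian θ) n ≤ cfQ a (k+1) + cfQ a k + n :=
  Nat.sInf_le (mem_repSet hcf hn hq2)

lemma repFun_ge (hcf : IsCF θ a) {k : ℕ} (hk : 1 ≤ k) :
    cfQ a (k+1) + cfQ a k ≤ repFun (sturmian θ) (cfQ a k + 1) + 2 := by
  classical
  set n := cfQ a k + 1 with hn
  have hqk := cfQ_pos_s9 hcf k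
  obtain ⟨b1, _, _, hb1⟩ := bad_exists hcf hk 0
  have hex2 : ∃ m, b1 + 2 ≤ m ∧ badPos θ a k m := by
    obtain ⟨m, hm1, _, hm3⟩ := bad_exists hcf hk (b1+2)
    exact ⟨m, hm1, hm3⟩
  set b2 := Nat.find hex2 with hb2d
  have hb2 := Nat.find_spec hex2
  have hmin : ∀ m, m < b2 → ¬(b1 + 2 ≤ m ∧ badPos θ a k m) := fun m hm => Nat.find_min hex2 hm
  have hgapLB : b1 + cfQ a (k+1) ≤ b2 + 1 := by
    rcases bad_gap hcf hk (show b1 < b2 from by omega) hb1 hb2.2 with h | h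
    · omega
    · exact h
  set s := b1 + 2 with hs
  set L' := b2 - s with hL'
  have hb2s : s ≤ b2 := hb2.1
  have hper : ∀ i, i < L' → rotWord θ (s+i) = rotWord θ (s+i+cfQ a k) := by
    intro i hi
    have h9 := hmin (s+i) (by omega)
    have h10 : ¬ badPos θ a k (s+i) := by
      intro hb
      exact h9 ⟨by omega, hb⟩
    unfold badPos at h10
    push_neg at h10
    exact h10
  -- every element of the repetitivity set exceeds L' + q_k
  have hclaim : ∀ r' ∈ {r' | ∀ W ∈ Lang (sturmian θ), W.length = r' →
      ∀ w ∈ Lang (sturmian θ), w.length = n → w <:+: W}, L' + cfQ a k + 1 ≤ r' := by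
    intro r' hr'
    by_contra hcon
    push_neg at hcon
    have hr'le : r' ≤ L' + cfQ a k := by omega
    have happ := hr' (windowW θ s r') (windowW_mem_Lang s r') (windowW_length s r')
      (windowW θ b2 n) (windowW_mem_Lang b2 n) (windowW_length b2 n)
    -- extend to the full periodic window
    have hpre : windowW θ s r' <+: windowW θ s (L' + cfQ a k) := by
      refine ⟨windowW θ (s + r') (L' + cfQ a k - r'), ?_⟩
      rw [← windowW_append]
      congr 1
      omega
    have hinf2 : windowW θ b2 n <:+: windowW θ s (L' + cfQ a k) :=
      happ.trans hpre.isInfix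
    obtain ⟨i, hilen, hival⟩ := infix_windowW hinf2
    simp only [windowW_length] at hilen hival
    have hiL : i < L' := by omega
    have h0 : rotWord θ (b2 + 0) = rotWord θ (s + i + 0) := by
      have h00 := List.getElem_of_eq hival (show (0:ℕ) < (windowW θ b2 n).length from by
        rw [windowW_length]; omega)
      rw [windowW_getElem _ _ _ (by omega), windowW_getElem _ _ _ (by omega)] at h00
      exact h00
    have hq : rotWord θ (b2 + cfQ a k) = rotWord θ (s + i + cfQ a k) := by
      have h00 := List.getElem_of_eq hival (show cfQ a k < (windowW θ b2 n).length from by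
        rw [windowW_length]; omega)
      rw [windowW_getElem _ _ _ (by omega), windowW_getElem _ _ _ (by omega)] at h00
      exact h00
    simp only [Nat.add_zero] at h0
    have hbad2 := hb2.2
    unfold badPos at hbad2
    apply hbad2
    show rotWord θ b2 = rotWord θ (b2 + cfQ a k)
    rw [h0, hq, hper i hiL]
  -- the repetitivity set is nonempty
  obtain ⟨k', _, hk2'⟩ := exists_k hcf n (by omega)
  have hne : {r' | ∀ W ∈ Lang (sturmian θ), W.length = r' →
      ∀ w ∈ Lang (sturmian θ), w.length = n → w <:+: W}.Nonempty :=
    ⟨cfQ a (k'+1) + cfQ a k' + n, mem_repSet hcf (by omega) hk2'⟩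
  have hmem := Nat.sInf_mem hne
  have hrf := hclaim _ hmem
  have hrepeq : repFun (sturmian θ) n = sInf {r' | ∀ W ∈ Lang (sturmian θ), W.length = r' →
      ∀ w ∈ Lang (sturmian θ), w.length = n → w <:+: W} := rfl
  rw [hrepeq]
  omega

end RepFunBounds
section Final

variable {θ : ℝ} {a : ℕ → ℕ}

lemma qext_le (hcf : IsCF θ a) (k : ℕ) : qext a k ≤ cfQ a k := by
  cases k with
  | zero => simp [qext, cfQ]
  | succ j => exact cfQ_mono hcf j

lemma cfQ_succ_eq (k : ℕ) : cfQ a (k+1) = a (k+1) * cfQ a k + qext a k := by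
  cases k with
  | zero => simp [cfQ, qext]
  | succ j => rfl

lemma repFun_real_bound (hcf : IsCF θ a) {α c : ℝ} (hα : 1 < α) (hc : 1 < c)
    (hbound : ∀ m : ℕ, (a (m+1) : ℝ) ≤ c * (cfQ a m : ℝ) ^ (α - 1))
    (n : ℕ) (hn : 1 ≤ n) :
    (repFun (sturmian θ) n : ℝ) ≤ (2*c+3) * (n : ℝ) ^ α := by
  obtain ⟨k, hk1, hk2⟩ := exists_k hcf n hn
  have h1 := repFun_le hcf hn hk2
  have hq := cfQ_pos_s9 hcf k
  have hqr : (0:ℝ) < cfQ a k := by exact_mod_cast hq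
  have hnr : (1:ℝ) ≤ n := by exact_mod_cast hn
  have hqn : (cfQ a k : ℝ) ≤ n := by exact_mod_cast hk1
  have hqk1 : (cfQ a (k+1) : ℝ) ≤ c * (cfQ a k : ℝ)^α + cfQ a k := by
    have h2 : (cfQ a (k+1) : ℝ) = (a (k+1) : ℝ) * cfQ a k + qext a k := by
      rw [cfQ_succ_eq]; push_cast; ring
    have h3 := hbound k
    have h4 : (qext a k : ℝ) ≤ cfQ a k := by exact_mod_cast qext_le hcf k
    have h5 : (cfQ a k : ℝ)^(α-1) * cfQ a k = (cfQ a k : ℝ)^α := by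
      have h6 := Real.rpow_add_one (ne_of_gt hqr) (α-1)
      rw [show α - 1 + 1 = α from by ring] at h6
      exact h6.symm
    have h6 : (a (k+1) : ℝ) * cfQ a k ≤ c * (cfQ a k : ℝ)^α := by
      calc (a (k+1) : ℝ) * cfQ a k ≤ (c * (cfQ a k : ℝ)^(α-1)) * cfQ a k :=
        mul_le_mul_of_nonneg_right h3 hqr.le
      _ = c * ((cfQ a k : ℝ)^(α-1) * cfQ a k) := by ring
      _ = c * (cfQ a k : ℝ)^α := by rw [h5]
    linarith
  have hqα : (cfQ a k : ℝ)^α ≤ (n:ℝ)^α := Real.rpow_le_rpow hqr.le hqn (by linarith)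
  have hnα : (n:ℝ) ≤ (n:ℝ)^α := by
    calc (n:ℝ) = (n:ℝ)^(1:ℝ) := (Real.rpow_one _).symm
    _ ≤ (n:ℝ)^α := Real.rpow_le_rpow_of_exponent_le hnr (by linarith)
  have h7 : (repFun (sturmian θ) n : ℝ) ≤ (cfQ a (k+1) : ℝ) + cfQ a k + n := by
    exact_mod_cast h1
  have hnn : (0:ℝ) ≤ (n:ℝ)^α := by positivity
  have h8 : c * (cfQ a k : ℝ)^α ≤ c * (n:ℝ)^α := mul_le_mul_of_nonneg_left hqα (by linarith)
  calc (repFun (sturmian θ) n : ℝ) ≤ c * (n:ℝ)^α + 3 * (n:ℝ)^α := by linarith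
  _ ≤ (2*c+3) * (n:ℝ)^α := by nlinarith

end Final
set_option maxHeartbeats 1000000 in
/-- if `A_α(θ) < ∞`, witnessed by `c > 1` with `a_{m+1} ≤ c q_m^{α-1}`,
then `R_α < ∞`, `R_α ≥ A_α(θ)`, `R(n) ≤ (2c+3) n^α`, and if moreover `A_α(θ) > 0`
then `R_α > 0` (α-repetitivity). -/
theorem stmt9 (θ : ℝ) (a : ℕ → ℕ) (α : ℝ) (hα : 1 < α) (hcf : IsCF θ a)
    (c : ℝ) (hc : 1 < c)
    (hbound : ∀ m : ℕ, (a (m+1) : ℝ) ≤ c * (cfQ a m : ℝ) ^ (α - 1)) :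
    Ralpha (sturmian θ) α < ⊤ ∧
    Acf a α ≤ Ralpha (sturmian θ) α ∧
    (0 < Acf a α → 0 < Ralpha (sturmian θ) α) ∧
    (∀ n : ℕ, 1 ≤ n → (repFun (sturmian θ) n : ℝ) ≤ (2*c+3) * (n : ℝ) ^ α) := by
  have hp4 : ∀ n : ℕ, 1 ≤ n → (repFun (sturmian θ) n : ℝ) ≤ (2*c+3) * (n : ℝ) ^ α :=
    fun n hn => repFun_real_bound hcf hα hc hbound n hn
  -- Ralpha ≤ ofReal (2c+3)
  have hRle : Ralpha (sturmian θ) α ≤ ENNReal.ofReal (2*c+3) := by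
    unfold Ralpha
    apply Filter.limsup_le_of_le (by isBoundedDefault)
    filter_upwards [Filter.eventually_ge_atTop 1] with n hn
    have hnr : (0:ℝ) < n := by exact_mod_cast hn
    have hb0 : ((n : ENNReal))^α ≠ 0 := by
      rw [Ne, ENNReal.rpow_eq_zero_iff]
      push_neg
      constructor
      · intro h
        exfalso
        have : n = 0 := by exact_mod_cast h
        omega
      · intro h
        exfalso
        exact (ENNReal.natCast_ne_top n) h
    have hbt : ((n : ENNReal))^α ≠ ⊤ :=
      ENNReal.rpow_ne_top_of_nonneg (by linarith) (ENNReal.natCast_ne_top n)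
    rw [ENNReal.div_le_iff hb0 hbt]
    have hcast1 : ((repFun (sturmian θ) n : ℕ) : ENNReal)
        = ENNReal.ofReal ((repFun (sturmian θ) n : ℕ) : ℝ) := by
      rw [ENNReal.ofReal_natCast]
    have hcast2 : ((n : ENNReal))^α = ENNReal.ofReal ((n:ℝ)^α) := by
      rw [← ENNReal.ofReal_natCast n, ENNReal.ofReal_rpow_of_pos hnr]
    rw [hcast1, hcast2, ← ENNReal.ofReal_mul (by linarith : (0:ℝ) ≤ 2*c+3)]
    exact ENNReal.ofReal_le_ofReal (hp4 n hn)
  have hRtop : Ralpha (sturmian θ) α < ⊤ := lt_of_le_of_lt hRle ENNReal.ofReal_lt_top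
  -- Part 2 : Acf ≤ Ralpha
  have htendQ : Filter.Tendsto (fun k => cfQ a k) atTop atTop := by
    apply Filter.tendsto_atTop_atTop.mpr
    intro b
    refine ⟨b+1, fun x hx => ?_⟩
    have h1 := cfQ_ge hcf (x-1)
    have h2 : cfQ a (x-1+1) = cfQ a x := by congr 1; omega
    omega
  have htendφ : Filter.Tendsto (fun k => cfQ a k + 1) atTop atTop := by
    apply Filter.tendsto_atTop_atTop.mpr
    intro b
    obtain ⟨N, hN⟩ := Filter.tendsto_atTop_atTop.mp htendQ b
    exact ⟨N, fun x hx => by have := hN x hx; omega⟩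
  set gF : ℕ → ENNReal := fun k =>
    (repFun (sturmian θ) (cfQ a k + 1) : ENNReal) / ((cfQ a k + 1 : ℕ) : ENNReal) ^ α with hgF
  have hstepA : Filter.limsup gF atTop ≤ Ralpha (sturmian θ) α := by
    unfold Ralpha
    rw [Filter.limsup_eq, Filter.limsup_eq]
    apply sInf_le_sInf
    intro b hb
    have hev := htendφ.eventually hb
    filter_upwards [hev] with k hk
    exact hk
  have hgle : Filter.limsup gF atTop ≤ ENNReal.ofReal (2*c+3) := le_trans hstepA hRle
  have hstepB : Acf a α ≤ Filter.limsup gF atTop := by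
    apply ENNReal.le_of_forall_pos_le_add
    intro ε' hε' hfin
    set ε : ℝ := (ε' : ℝ) / (2*c+3) with hεd
    have hε'pos : (0:ℝ) < ε' := hε'
    have hεpos : 0 < ε := by
      rw [hεd]
      positivity
    -- eventual ratio bound
    have hcont : Filter.Tendsto (fun k => (1 + 1/(cfQ a k : ℝ))^α) atTop (nhds 1) := by
      have h1 : Filter.Tendsto (fun k => (cfQ a k : ℝ)) atTop atTop :=
        tendsto_natCast_atTop_atTop.comp htendQ
      have h2 : Filter.Tendsto (fun k => 1 + 1/(cfQ a k : ℝ)) atTop (nhds 1) := by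
        have h3 : Filter.Tendsto (fun k => 1/(cfQ a k : ℝ)) atTop (nhds 0) := by
          simp only [one_div]
          exact tendsto_inv_atTop_zero.comp h1
        have := Filter.Tendsto.add (tendsto_const_nhds (x := (1:ℝ))) h3
        simpa using this
      have h3 : Filter.Tendsto (fun x : ℝ => x^α) (nhds 1) (nhds 1) := by
        have := (Real.continuousAt_rpow_const 1 α (Or.inl one_ne_zero)).tendsto
        rwa [Real.one_rpow] at this
      exact h3.comp h2
    have hev1 : ∀ᶠ k in atTop, (1 + 1/(cfQ a k : ℝ))^α ≤ 1 + ε :=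
      hcont.eventually (eventually_le_nhds (by linarith))
    have hev2 : ∀ᶠ k in atTop, 2 ≤ cfQ a k := htendQ.eventually_ge_atTop 2
    have hev : ∀ᶠ k in atTop,
        (a (k+1) : ENNReal) * (cfQ a k : ENNReal) ^ (1 - α)
          ≤ ENNReal.ofReal (1+ε) * gF k := by
      filter_upwards [hev1, hev2] with k h1 h2
      have hk1 : 1 ≤ k := by
        by_contra hcon
        push_neg at hcon
        have hk0 : k = 0 := by omega
        rw [hk0] at h2
        simp [cfQ] at h2
      have hqpos : (0:ℝ) < cfQ a k := by
        have := cfQ_pos_s9 hcf k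
        exact_mod_cast this
      have hq2 : (2:ℝ) ≤ cfQ a k := by exact_mod_cast h2
      have hA1 : (1:ℝ) ≤ (a (k+1) : ℝ) := by exact_mod_cast hcf.2.1 (k+1) (by omega)
      -- R ≥ a_{k+1} q_k
      have hlow := repFun_ge hcf hk1
      have h3 : a (k+1) * cfQ a k ≤ cfQ a (k+1) := by
        rw [cfQ_succ_eq]
        omega
      have h5 : a (k+1) * cfQ a k ≤ repFun (sturmian θ) (cfQ a k + 1) := by omega
      have hR1 : (a (k+1) : ℝ) * (cfQ a k : ℝ) ≤ (repFun (sturmian θ) (cfQ a k + 1) : ℝ) := by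
        exact_mod_cast h5
      -- real inequality
      have hqα : (0:ℝ) < (cfQ a k:ℝ)^α := Real.rpow_pos_of_pos hqpos α
      have hq1α : (0:ℝ) < ((cfQ a k:ℝ)+1)^α := Real.rpow_pos_of_pos (by linarith) α
      have hratio : ((cfQ a k:ℝ)+1)^α ≤ (1+ε) * (cfQ a k:ℝ)^α := by
        have heq : ((cfQ a k:ℝ)+1)^α = (1 + 1/(cfQ a k:ℝ))^α * (cfQ a k:ℝ)^α := by
          rw [← Real.mul_rpow (by positivity) hqpos.le]
          congr 1
          field_simp
        rw [heq]
        exact mul_le_mul_of_nonneg_right h1 hqα.le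
      have hreal : (a (k+1) : ℝ) * (cfQ a k : ℝ)^(1-α)
          ≤ (1+ε) * ((repFun (sturmian θ) (cfQ a k + 1) : ℝ) / ((cfQ a k:ℝ)+1)^α) := by
        have hsub : (cfQ a k:ℝ)^(1-α) = (cfQ a k:ℝ) / (cfQ a k:ℝ)^α := by
          rw [Real.rpow_sub hqpos, Real.rpow_one]
        rw [hsub, mul_div_assoc', mul_div_assoc']
        rw [div_le_div_iff₀ hqα hq1α]
        calc (a (k+1):ℝ) * (cfQ a k:ℝ) * ((cfQ a k:ℝ)+1)^α
            ≤ (a (k+1):ℝ) * (cfQ a k:ℝ) * ((1+ε) * (cfQ a k:ℝ)^α) := by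
              apply mul_le_mul_of_nonneg_left hratio
              positivity
        _ = (1+ε) * ((a (k+1):ℝ) * (cfQ a k:ℝ)) * (cfQ a k:ℝ)^α := by ring
        _ ≤ (1+ε) * (repFun (sturmian θ) (cfQ a k + 1) : ℝ) * (cfQ a k:ℝ)^α := by
              apply mul_le_mul_of_nonneg_right _ hqα.le
              apply mul_le_mul_of_nonneg_left hR1 (by linarith)
      -- transfer to ENNReal
      have hL : (a (k+1) : ENNReal) * (cfQ a k : ENNReal) ^ (1 - α)
          = ENNReal.ofReal ((a (k+1) : ℝ) * (cfQ a k : ℝ)^(1-α)) := by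
        rw [← ENNReal.ofReal_natCast (a (k+1)), ← ENNReal.ofReal_natCast (cfQ a k),
            ENNReal.ofReal_rpow_of_pos hqpos,
            ← ENNReal.ofReal_mul (by positivity)]
      have hden : ((cfQ a k + 1 : ℕ) : ENNReal)^α = ENNReal.ofReal (((cfQ a k : ℝ)+1)^α) := by
        rw [← ENNReal.ofReal_natCast (cfQ a k + 1),
            ENNReal.ofReal_rpow_of_pos (by push_cast; linarith)]
        congr 1
        push_cast
        ring
      have hGfk : gF k = ENNReal.ofReal
          ((repFun (sturmian θ) (cfQ a k + 1) : ℝ) / ((cfQ a k:ℝ)+1)^α) := by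
        calc gF k = ((repFun (sturmian θ) (cfQ a k + 1) : ℕ) : ENNReal)
            / ((cfQ a k + 1 : ℕ) : ENNReal)^α := rfl
        _ = ENNReal.ofReal ((repFun (sturmian θ) (cfQ a k + 1) : ℕ) : ℝ)
            / ENNReal.ofReal (((cfQ a k:ℝ)+1)^α) := by rw [hden, ENNReal.ofReal_natCast]
        _ = ENNReal.ofReal
            ((repFun (sturmian θ) (cfQ a k + 1) : ℝ) / ((cfQ a k:ℝ)+1)^α) :=
          (ENNReal.ofReal_div_of_pos hq1α).symm
      rw [hL, hGfk, ← ENNReal.ofReal_mul (by linarith : (0:ℝ) ≤ 1+ε)]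
      exact ENNReal.ofReal_le_ofReal hreal
    have hAle : Acf a α ≤ Filter.limsup (fun k => ENNReal.ofReal (1+ε) * gF k) atTop :=
      Filter.limsup_le_limsup hev
    have hconst : Filter.limsup (fun k => ENNReal.ofReal (1+ε) * gF k) atTop
        = ENNReal.ofReal (1+ε) * Filter.limsup gF atTop :=
      ENNReal.limsup_const_mul_of_ne_top ENNReal.ofReal_ne_top
    rw [hconst] at hAle
    have hsplit : ENNReal.ofReal (1+ε) = 1 + ENNReal.ofReal ε := by
      rw [ENNReal.ofReal_add (by norm_num) hεpos.le, ENNReal.ofReal_one]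
    rw [hsplit, add_mul, one_mul] at hAle
    have hmul : ENNReal.ofReal ε * Filter.limsup gF atTop ≤ (ε' : ENNReal) := by
      calc ENNReal.ofReal ε * Filter.limsup gF atTop
          ≤ ENNReal.ofReal ε * ENNReal.ofReal (2*c+3) := mul_le_mul_right hgle _
      _ = ENNReal.ofReal (ε * (2*c+3)) := (ENNReal.ofReal_mul hεpos.le).symm
      _ = ENNReal.ofReal (ε' : ℝ) := by
          congr 1
          rw [hεd]
          field_simp
      _ = (ε' : ENNReal) := ENNReal.ofReal_coe_nnreal
    calc Acf a α ≤ Filter.limsup gF atTop + ENNReal.ofReal ε * Filter.limsup gF atTop := hAle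
    _ ≤ Filter.limsup gF atTop + (ε' : ENNReal) := add_le_add le_rfl hmul
  have hAcf : Acf a α ≤ Ralpha (sturmian θ) α := le_trans hstepB hstepA
  exact ⟨hRtop, hAcf, fun h => lt_of_lt_of_le h hAcf, hp4⟩

end CFPaper
end
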